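/- arXiv:2603.21001 — 6 statements merged into one kernel-verified Lean document; each statement's English description precedes it below -/
import Mathlib

section
/- Let p be a prime, let V be a nonzero finite-dimensional vector space over a finite field of characteristic p, and let H be a subgroup of GL(V) acting irreducibly on V. If p² divides the order of the affine permutation group G = V ⋊ H, then (G, V) is p-moderate. -/
open Pointwise

/-- The `p`-part of a natural number `n`: the largest power of `p` dividing `n`. -/
def pPart (p n : ℕ) : ℕ := p ^ n.factorization p

/-- A group `G` acting on `Ω` is `p`-moderate if there is a subset `Δ` of `Ω` whose
setwise stabilizer `S` satisfies `1 < |S|_p < |G|_p`. -/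
def IsPModerate (p : ℕ) (G : Type*) [Group G] (Ω : Type*) [MulAction G Ω] : Prop :=
  ∃ Δ : Set Ω,
    1 < pPart p (Nat.card (MulAction.stabilizer G Δ)) ∧
      pPart p (Nat.card (MulAction.stabilizer G Δ)) < pPart p (Nat.card G)

/-- The affine permutation group `V ⋊ H` on `V` determined by a subgroup `H` of `GL(V)`:
all permutations of `V` of the form `x ↦ h(x) + v` with `h ∈ H`, `v ∈ V`. -/
def affPerm {F V : Type*} [Field F] [AddCommGroup V] [Module F V]
    (H : Subgroup (V →ₗ[F] V)ˣ) : Subgroup (Equiv.Perm V) where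
  carrier := {σ | ∃ h ∈ H, ∃ v : V, ∀ x : V, σ x = (h : V →ₗ[F] V) x + v}
  one_mem' := ⟨1, H.one_mem, 0, fun x => by simp⟩
  mul_mem' := by
    rintro σ τ ⟨h, hH, v, hσ⟩ ⟨h', h'H, v', hτ⟩
    refine ⟨h * h', H.mul_mem hH h'H, (h : V →ₗ[F] V) v' + v, fun x => ?_⟩
    simp only [Equiv.Perm.mul_apply, hσ, hτ, Units.val_mul, Module.End.mul_apply, map_add]
    abel
  inv_mem' := by
    rintro σ ⟨h, hH, v, hσ⟩
    refine ⟨h⁻¹, H.inv_mem hH, -(((h⁻¹ : (V →ₗ[F] V)ˣ) : V →ₗ[F] V) v), fun y => ?_⟩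
    have key : σ (((h⁻¹ : (V →ₗ[F] V)ˣ) : V →ₗ[F] V) y +
        -(((h⁻¹ : (V →ₗ[F] V)ˣ) : V →ₗ[F] V) v)) = y := by
      rw [hσ, map_add, map_neg, ← Module.End.mul_apply, ← Module.End.mul_apply,
        ← Units.val_mul, mul_inv_cancel]
      simp
    calc σ⁻¹ y = σ⁻¹ (σ (((h⁻¹ : (V →ₗ[F] V)ˣ) : V →ₗ[F] V) y +
        -(((h⁻¹ : (V →ₗ[F] V)ˣ) : V →ₗ[F] V) v))) := by rw [key]
    _ = _ := by simp

section AffAux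

variable {F V : Type*} [Field F] [AddCommGroup V] [Module F V] {H : Subgroup (V →ₗ[F] V)ˣ}

theorem affPerm_exists (σ : affPerm H) :
    ∃ h : (V →ₗ[F] V)ˣ, h ∈ H ∧
      ∀ x : V, (σ : Equiv.Perm V) x = (h : V →ₗ[F] V) x + (σ : Equiv.Perm V) 0 := by
  obtain ⟨h, hH, v, hs⟩ := σ.2
  have h0 : (σ : Equiv.Perm V) 0 = v := by rw [hs 0]; simp
  exact ⟨h, hH, fun x => by rw [hs x, h0]⟩

noncomputable def linPart (σ : affPerm H) : (V →ₗ[F] V)ˣ := (affPerm_exists σ).choose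

theorem linPart_mem (σ : affPerm H) : linPart σ ∈ H := (affPerm_exists σ).choose_spec.1

theorem linPart_spec (σ : affPerm H) (x : V) :
    (σ : Equiv.Perm V) x = (linPart σ : V →ₗ[F] V) x + (σ : Equiv.Perm V) 0 :=
  (affPerm_exists σ).choose_spec.2 x

theorem linPart_unique (σ : affPerm H) (h : (V →ₗ[F] V)ˣ)
    (hs : ∀ x : V, (σ : Equiv.Perm V) x = (h : V →ₗ[F] V) x + (σ : Equiv.Perm V) 0) :
    linPart σ = h := by
  refine Units.ext (LinearMap.ext fun x => ?_)
  exact add_right_cancel ((linPart_spec σ x).symm.trans (hs x))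

noncomputable def linHom (H : Subgroup (V →ₗ[F] V)ˣ) : affPerm H →* (V →ₗ[F] V)ˣ where
  toFun := linPart
  map_one' := linPart_unique 1 1 (fun x => by simp)
  map_mul' σ τ := by
    refine linPart_unique (σ * τ) (linPart σ * linPart τ) fun x => ?_
    have h1 : ((σ * τ : affPerm H) : Equiv.Perm V) x
        = (σ : Equiv.Perm V) ((τ : Equiv.Perm V) x) := rfl
    have h0 : ((σ * τ : affPerm H) : Equiv.Perm V) 0
        = (σ : Equiv.Perm V) ((τ : Equiv.Perm V) 0) := rfl
    rw [h1, h0, linPart_spec τ x, linPart_spec σ ((linPart τ : V →ₗ[F] V) x + (τ : Equiv.Perm V) 0),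
      linPart_spec σ ((τ : Equiv.Perm V) 0)]
    simp only [Units.val_mul, Module.End.mul_apply, map_add]
    abel

def affPermMk (h : (V →ₗ[F] V)ˣ) (hh : h ∈ H) (v : V) : affPerm H :=
  ⟨{ toFun := fun x => (h : V →ₗ[F] V) x + v
     invFun := fun y => ((h⁻¹ : (V →ₗ[F] V)ˣ) : V →ₗ[F] V) (y - v)
     left_inv := fun x => by
       show ((h⁻¹ : (V →ₗ[F] V)ˣ) : V →ₗ[F] V) ((h : V →ₗ[F] V) x + v - v) = x
       rw [add_sub_cancel_right, ← Module.End.mul_apply, ← Units.val_mul, inv_mul_cancel,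
         Units.val_one, Module.End.one_apply]
     right_inv := fun y => by
       show (h : V →ₗ[F] V) (((h⁻¹ : (V →ₗ[F] V)ˣ) : V →ₗ[F] V) (y - v)) + v = y
       rw [← Module.End.mul_apply, ← Units.val_mul, mul_inv_cancel, Units.val_one,
         Module.End.one_apply, sub_add_cancel] }, ⟨h, hh, v, fun x => rfl⟩⟩

theorem affPermMk_apply (h : (V →ₗ[F] V)ˣ) (hh : h ∈ H) (v x : V) :
    ((affPermMk h hh v : affPerm H) : Equiv.Perm V) x = (h : V →ₗ[F] V) x + v := rfl

theorem linPart_affPermMk (h : (V →ₗ[F] V)ˣ) (hh : h ∈ H) (v : V) :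
    linPart (affPermMk h hh v) = h :=
  linPart_unique _ _ fun x => by
    rw [affPermMk_apply, affPermMk_apply]
    simp

noncomputable def affPermEquivProd (H : Subgroup (V →ₗ[F] V)ˣ) : affPerm H ≃ H × V where
  toFun σ := (⟨linPart σ, linPart_mem σ⟩, (σ : Equiv.Perm V) 0)
  invFun hv := affPermMk hv.1.1 hv.1.2 hv.2
  left_inv σ := by
    refine Subtype.ext (Equiv.ext fun x => ?_)
    rw [affPermMk_apply]
    exact (linPart_spec σ x).symm
  right_inv := fun ⟨⟨h, hh⟩, v⟩ => by
    refine Prod.ext (Subtype.ext ?_) ?_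
    · exact linPart_affPermMk h hh v
    · show ((affPermMk h hh v : affPerm H) : Equiv.Perm V) 0 = v
      rw [affPermMk_apply]; simp

theorem mem_stab_zero_iff (σ : affPerm H) :
    σ ∈ MulAction.stabilizer (affPerm H) ({0} : Set V) ↔ (σ : Equiv.Perm V) 0 = 0 := by
  rw [MulAction.mem_stabilizer_iff]
  have : σ • ({0} : Set V) = {(σ : Equiv.Perm V) 0} := by
    rw [Set.smul_set_singleton]; rfl
  rw [this, Set.singleton_eq_singleton_iff]

noncomputable def stabZeroEquiv (H : Subgroup (V →ₗ[F] V)ˣ) :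
    MulAction.stabilizer (affPerm H) ({0} : Set V) ≃ H where
  toFun σ := ⟨linPart σ.1, linPart_mem σ.1⟩
  invFun h := ⟨affPermMk h.1 h.2 0, by
    rw [mem_stab_zero_iff, affPermMk_apply]; simp⟩
  left_inv σ := by
    refine Subtype.ext (Subtype.ext (Equiv.ext fun x => ?_))
    have h0 : (σ.1 : Equiv.Perm V) 0 = 0 := (mem_stab_zero_iff σ.1).1 σ.2
    show ((affPermMk (linPart σ.1) (linPart_mem σ.1) 0 : affPerm H) : Equiv.Perm V) x
      = (σ.1 : Equiv.Perm V) x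
    rw [affPermMk_apply, linPart_spec σ.1 x, h0]
  right_inv h := Subtype.ext (linPart_affPermMk h.1 h.2 0)

end AffAux

section AffAux2

variable {F V : Type*} [Field F] [AddCommGroup V] [Module F V] {H : Subgroup (V →ₗ[F] V)ˣ}

theorem transl_smul_set {W : AddSubgroup V} {w : V} (hw : w ∈ W) :
    (affPermMk (1 : (V →ₗ[F] V)ˣ) H.one_mem w) • (W : Set V) = (W : Set V) := by
  refine Set.ext fun y => ?_
  rw [Set.mem_smul_set]
  constructor
  · rintro ⟨z, hz, rfl⟩
    have : (affPermMk (1 : (V →ₗ[F] V)ˣ) H.one_mem w) • z = z + w := by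
      show ((affPermMk (1 : (V →ₗ[F] V)ˣ) H.one_mem w : affPerm H) : Equiv.Perm V) z = z + w
      rw [affPermMk_apply, Units.val_one, Module.End.one_apply]
    rw [this]
    exact W.add_mem hz hw
  · intro hy
    refine ⟨y - w, W.sub_mem hy hw, ?_⟩
    show ((affPermMk (1 : (V →ₗ[F] V)ˣ) H.one_mem w : affPerm H) : Equiv.Perm V) (y - w) = y
    rw [affPermMk_apply, Units.val_one, Module.End.one_apply, sub_add_cancel]

noncomputable def stabKerEquiv (H : Subgroup (V →ₗ[F] V)ˣ) (W : AddSubgroup V) :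
    MonoidHom.ker ((linHom H).comp
      (MulAction.stabilizer (affPerm H) (W : Set V)).subtype) ≃ W where
  toFun σ := ⟨(σ.1.1 : Equiv.Perm V) 0, by
    have h0 : σ.1.1 • (0 : V) ∈ σ.1.1 • (W : Set V) := Set.smul_mem_smul_set W.zero_mem
    rw [σ.1.2] at h0
    exact h0⟩
  invFun w := ⟨⟨affPermMk (1 : (V →ₗ[F] V)ˣ) H.one_mem w.1, by
      rw [MulAction.mem_stabilizer_iff]
      exact transl_smul_set w.2⟩, by
      rw [MonoidHom.mem_ker]
      show linPart (affPermMk (1 : (V →ₗ[F] V)ˣ) H.one_mem w.1) = 1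
      exact linPart_affPermMk _ H.one_mem _⟩
  left_inv σ := by
    refine Subtype.ext (Subtype.ext (Subtype.ext (Equiv.ext fun y => ?_)))
    have hk : linPart σ.1.1 = 1 := σ.2
    show ((affPermMk (1 : (V →ₗ[F] V)ˣ) H.one_mem ((σ.1.1 : Equiv.Perm V) 0) : affPerm H) :
      Equiv.Perm V) y = (σ.1.1 : Equiv.Perm V) y
    rw [affPermMk_apply, linPart_spec σ.1.1 y, hk]
  right_inv w := by
    refine Subtype.ext ?_
    show ((affPermMk (1 : (V →ₗ[F] V)ˣ) H.one_mem w.1 : affPerm H) : Equiv.Perm V) 0 = w.1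
    rw [affPermMk_apply, Units.val_one, Module.End.one_apply, zero_add]

end AffAux2

section PPart

theorem pPart_mul {p : ℕ} (hp : p.Prime) {a b : ℕ} (ha : a ≠ 0) (hb : b ≠ 0) :
    pPart p (a * b) = pPart p a * pPart p b := by
  unfold pPart
  rw [Nat.factorization_mul ha hb, Finsupp.add_apply, pow_add]

theorem pPart_of_not_dvd {p n : ℕ} (h : ¬ p ∣ n) : pPart p n = 1 := by
  unfold pPart
  rw [Nat.factorization_eq_zero_of_not_dvd h, pow_zero]

theorem one_lt_pPart {p : ℕ} (hp : p.Prime) {n : ℕ} (hn : n ≠ 0) (h : p ∣ n) :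
    1 < pPart p n := by
  unfold pPart
  have h1 : 1 ≤ n.factorization p := by
    rw [← hp.pow_dvd_iff_le_factorization hn, pow_one]
    exact h
  calc 1 < p ^ 1 := by rw [pow_one]; exact hp.one_lt
  _ ≤ p ^ n.factorization p := Nat.pow_le_pow_right hp.pos h1

theorem pPart_prime_pow {p : ℕ} (hp : p.Prime) (k : ℕ) : pPart p (p ^ k) = p ^ k := by
  unfold pPart
  rw [hp.factorization_pow, Finsupp.single_eq_same]

theorem pPart_pos {p n : ℕ} (hp : p.Prime) : 0 < pPart p n := Nat.pow_pos hp.pos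

end PPart


theorem affine_char_p_is_p_moderate
    (p : ℕ) (hp : p.Prime) (F V : Type*) [Field F] [Finite F] [CharP F p]
    [AddCommGroup V] [Module F V] [FiniteDimensional F V] [Nontrivial V]
    (H : Subgroup (V →ₗ[F] V)ˣ)
    (hirr : ∀ W : Submodule F V,
      (∀ h ∈ H, ∀ v ∈ W, (h : V →ₗ[F] V) v ∈ W) → W = ⊥ ∨ W = ⊤)
    (hdvd : p ^ 2 ∣ Nat.card (affPerm H)) :
    IsPModerate p (affPerm H) V := by
  classical
  have hFV : Finite V := Module.finite_of_finite F
  have hFL : Finite (V →ₗ[F] V) := Module.finite_of_finite F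
  obtain ⟨m, hm1, hVcard⟩ : ∃ m : ℕ, 1 ≤ m ∧ Nat.card V = p ^ m := by
    have instF : Fintype F := Fintype.ofFinite F
    have instV : Fintype V := Fintype.ofFinite V
    obtain ⟨n, hpp, hF⟩ := FiniteField.card F p
    refine ⟨(n : ℕ) * Module.finrank F V, ?_, ?_⟩
    · have h1 : 1 ≤ (n : ℕ) := n.one_le
      have h2 : 0 < Module.finrank F V := Module.finrank_pos
      exact Nat.one_le_iff_ne_zero.2 (Nat.mul_ne_zero (by omega) (by omega))
    · rw [Nat.card_eq_fintype_card, Module.card_eq_pow_finrank (K := F) (V := V), hF, ← pow_mul]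
  have hH0 : Nat.card H ≠ 0 := Nat.card_pos.ne'
  have hV0 : Nat.card V ≠ 0 := Nat.card_pos.ne'
  have hGcard : Nat.card (affPerm H) = Nat.card H * Nat.card V := by
    rw [Nat.card_congr (affPermEquivProd H), Nat.card_prod]
  by_cases hdH : p ∣ Nat.card H
  · refine ⟨({0} : Set V), ?_, ?_⟩
    all_goals
      rw [Nat.card_congr (stabZeroEquiv H)]
    · exact one_lt_pPart hp hH0 hdH
    · rw [hGcard, pPart_mul hp hH0 hV0, hVcard, pPart_prime_pow hp]
      refine (lt_mul_iff_one_lt_right (pPart_pos hp)).2 ?_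
      exact Nat.one_lt_pow (by omega) hp.one_lt
  · have hm2 : 2 ≤ m := by
      have h2 : p ^ 2 ∣ Nat.card H * p ^ m := by rw [← hVcard, ← hGcard]; exact hdvd
      have hcop : Nat.Coprime (p ^ 2) (Nat.card H) :=
        Nat.Coprime.pow_left _ ((Nat.Prime.coprime_iff_not_dvd hp).2 hdH)
      have h3 : p ^ 2 ∣ p ^ m := hcop.dvd_of_dvd_mul_left h2
      exact (Nat.pow_dvd_pow_iff_le_right hp.one_lt).1 h3
    obtain ⟨x, hx⟩ := exists_ne (0 : V)
    have hfact : Fact p.Prime := ⟨hp⟩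
    have hcardW : Nat.card (AddSubgroup.zmultiples x) = p := by
      rw [Nat.card_zmultiples]
      refine addOrderOf_eq_prime ?_ hx
      rw [← Nat.cast_smul_eq_nsmul F p x, CharP.cast_eq_zero, zero_smul]
    set W := AddSubgroup.zmultiples x with hWdef
    refine ⟨(W : Set V), ?_, ?_⟩
    all_goals
      set S := MulAction.stabilizer (affPerm H) (W : Set V) with hSdef
      set f := (linHom H).comp S.subtype with hfdef
      have hcardS : Nat.card S = Nat.card f.range * Nat.card f.ker := by
        rw [Subgroup.card_eq_card_quotient_mul_card_subgroup f.ker,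
          Nat.card_congr (QuotientGroup.quotientKerEquivRange f).toEquiv]
      have hker : Nat.card f.ker = p := by
        rw [Nat.card_congr (stabKerEquiv H W), hcardW]
      have hrange : ¬ p ∣ Nat.card f.range := by
        intro hdvd'
        refine hdH (hdvd'.trans (Subgroup.card_dvd_of_le ?_))
        rintro g hg
        obtain ⟨σ, rfl⟩ := hg
        exact linPart_mem σ.1
      have hrange0 : Nat.card f.range ≠ 0 := Nat.card_pos.ne'
      have hS : pPart p (Nat.card S) = p := by
        rw [hcardS, hker, pPart_mul hp hrange0 hp.pos.ne', pPart_of_not_dvd hrange, one_mul]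
        simpa using pPart_prime_pow hp 1
      rw [hS]
    · exact hp.one_lt
    · rw [hGcard, hVcard, pPart_mul hp hH0 (by rw [← hVcard]; exact hV0),
        pPart_of_not_dvd hdH, one_mul, pPart_prime_pow hp]
      calc p = p ^ 1 := (pow_one p).symm
      _ < p ^ m := Nat.pow_lt_pow_right hp.one_lt (by omega)
end

section
/- Let V be a finite-dimensional vector space over a finite field of odd characteristic (so |V| is odd), and let H be a subgroup of GL(V) whose Sylow 2-subgroups are elementary abelian of order 4. If H has a regular orbit on V (i.e., some v ∈ V has trivial stabilizer in H), then the affine permutation group G = V ⋊ H acting on V is 2-moderate. -/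
open Pointwise

section Aux

variable {F V : Type*} [Field F] [AddCommGroup V] [Module F V]

/-- The permutation of `V` induced by a unit of `V →ₗ[F] V`. -/
def unitPerm (u : (V →ₗ[F] V)ˣ) : Equiv.Perm V where
  toFun := (u : V →ₗ[F] V)
  invFun := ((u⁻¹ : (V →ₗ[F] V)ˣ) : V →ₗ[F] V)
  left_inv x := by
    show ((u⁻¹ : (V →ₗ[F] V)ˣ) : V →ₗ[F] V) (((u : (V →ₗ[F] V)ˣ) : V →ₗ[F] V) x) = x
    rw [← Module.End.mul_apply, ← Units.val_mul, inv_mul_cancel, Units.val_one,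
      Module.End.one_apply]
  right_inv x := by
    show ((u : (V →ₗ[F] V)ˣ) : V →ₗ[F] V) (((u⁻¹ : (V →ₗ[F] V)ˣ) : V →ₗ[F] V) x) = x
    rw [← Module.End.mul_apply, ← Units.val_mul, mul_inv_cancel, Units.val_one,
      Module.End.one_apply]

@[simp] lemma unitPerm_apply (u : (V →ₗ[F] V)ˣ) (x : V) :
    unitPerm u x = (u : V →ₗ[F] V) x := rfl

lemma unitPerm_mem {H : Subgroup (V →ₗ[F] V)ˣ} {u : (V →ₗ[F] V)ˣ} (hu : u ∈ H) :
    unitPerm u ∈ affPerm H := ⟨u, hu, 0, fun x => by simp⟩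

end Aux



theorem affine_two_moderate_of_regular_orbit
    (F V : Type*) [Field F] [Finite F] (hchar : Odd (ringChar F))
    [AddCommGroup V] [Module F V] [FiniteDimensional F V]
    (H : Subgroup (V →ₗ[F] V)ˣ)
    -- the Sylow 2-subgroups of H are elementary abelian of order 4
    (hSyl : ∀ P : Sylow 2 H, Nat.card P = 4 ∧
      (∀ x y : P, x * y = y * x) ∧ ∀ x : P, x ^ 2 = 1)
    -- H has a regular orbit on V
    (hreg : ∃ v : V, ∀ h ∈ H, (h : V →ₗ[F] V) v = v → h = 1) :
    IsPModerate 2 (affPerm H) V := by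
  classical
  have hFinV : Finite V := Module.finite_of_finite F
  have hFinL : Finite (V →ₗ[F] V) := Finite.of_injective _ DFunLike.coe_injective
  obtain ⟨v, hv⟩ := hreg
  -- extract an involution t of H
  obtain ⟨P⟩ : Nonempty (Sylow 2 H) := inferInstance
  obtain ⟨hP4, -, hPsq⟩ := hSyl P
  have hPnt : Nontrivial P := by
    rw [← Finite.one_lt_card_iff_nontrivial, hP4]
    norm_num
  obtain ⟨x, hx⟩ := exists_ne (1 : P)
  have hx2 : (x : H) ^ 2 = 1 := by
    have h := congrArg (Subtype.val) (hPsq x)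
    rw [SubmonoidClass.coe_pow] at h
    exact h
  have hx1 : (x : H) ≠ 1 := fun h => hx (Subtype.ext h)
  set t : (V →ₗ[F] V)ˣ := ((x : H) : (V →ₗ[F] V)ˣ) with ht_def
  have htH : t ∈ H := (x : H).2
  have ht2 : t ^ 2 = 1 := by
    have h := congrArg (Subtype.val) hx2
    rw [SubmonoidClass.coe_pow] at h
    exact h
  have ht1 : t ≠ 1 := fun h => hx1 (Subtype.ext h)
  -- the set Δ
  set Δ : Set V := {0, v, (t : V →ₗ[F] V) v} with hΔ_def
  have h0Δ : (0 : V) ∈ Δ := Set.mem_insert _ _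
  have hvΔ : v ∈ Δ := Set.mem_insert_of_mem _ (Set.mem_insert _ _)
  set S := MulAction.stabilizer (affPerm H) Δ with hS_def
  -- the involution in the stabilizer
  have httv : ∀ y : V, (t : V →ₗ[F] V) ((t : V →ₗ[F] V) y) = y := by
    intro y
    rw [← Module.End.mul_apply, ← Units.val_mul, ← sq, ht2, Units.val_one,
      Module.End.one_apply]
  have himgσ : unitPerm t '' Δ = Δ := by
    rw [hΔ_def, Set.image_insert_eq, Set.image_insert_eq, Set.image_singleton]
    rw [unitPerm_apply, unitPerm_apply, unitPerm_apply, map_zero, httv v]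
    exact congrArg (insert 0) (Set.pair_comm _ _)
  have hσstab : (⟨unitPerm t, unitPerm_mem htH⟩ : affPerm H) ∈ S := by
    rw [hS_def, MulAction.mem_stabilizer_iff, Subgroup.smul_def, ← Set.image_smul]
    simpa only [Equiv.Perm.smul_def] using himgσ
  set s0 : S := ⟨⟨unitPerm t, unitPerm_mem htH⟩, hσstab⟩ with hs0_def
  have hs0sq : s0 ^ 2 = 1 := by
    rw [sq]
    refine Subtype.ext (Subtype.ext (Equiv.ext fun y => ?_))
    show unitPerm t (unitPerm t y) = y
    rw [unitPerm_apply, unitPerm_apply]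
    exact httv y
  have hs0ne : s0 ≠ 1 := by
    intro h
    apply ht1
    have h' : unitPerm t = 1 := congrArg (fun z : S => ((z : affPerm H) : Equiv.Perm V)) h
    refine Units.ext (LinearMap.ext fun y => ?_)
    have := congrArg (fun e : Equiv.Perm V => e y) h'
    simpa using this
  have h2S : 2 ∣ Nat.card S := by
    have : orderOf s0 = 2 := orderOf_eq_prime hs0sq hs0ne
    rw [← this]
    exact orderOf_dvd_natCard s0
  -- no subgroup of order 4 in the stabilizer
  have h4S : ¬ (4 ∣ Nat.card S) := by
    intro h4
    obtain ⟨Q, hQ⟩ := Sylow.exists_subgroup_card_pow_prime (G := S) 2 (n := 2)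
      (by norm_num; exact h4)
    -- restriction to Δ
    have hstab : ∀ g : S, ∀ y : V, y ∈ Δ ↔ ((g : affPerm H) : Equiv.Perm V) y ∈ Δ := by
      intro g y
      have himg : ((g : affPerm H) : Equiv.Perm V) '' Δ = Δ := by
        have hg := MulAction.mem_stabilizer_iff.mp g.2
        rw [Subgroup.smul_def, ← Set.image_smul] at hg
        simpa only [Equiv.Perm.smul_def] using hg
      constructor
      · intro hy
        rw [← himg]
        exact Set.mem_image_of_mem _ hy
      · intro hy
        rw [← himg] at hy
        obtain ⟨z, hz, hze⟩ := hy
        rwa [← (((g : affPerm H) : Equiv.Perm V)).injective hze]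
    set φ : Q →* Equiv.Perm Δ :=
      { toFun := fun q =>
          Equiv.Perm.subtypePerm (((q : S) : affPerm H) : Equiv.Perm V) (fun y => (hstab (q : S) y).symm)
        map_one' := Equiv.ext fun y => rfl
        map_mul' := fun a b => Equiv.ext fun y => rfl } with hφ_def
    by_cases hinj : Function.Injective φ
    · have hd1 : Nat.card Q ∣ Nat.card (Equiv.Perm Δ) :=
        Subgroup.card_dvd_of_injective φ hinj
      have hΔ3 : Nat.card Δ ≤ 3 := by
        rw [Nat.card_coe_set_eq, hΔ_def]
        have h1 := Set.ncard_insert_le (0 : V) {v, (t : V →ₗ[F] V) v}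
        have h2 := Set.ncard_insert_le v ({(t : V →ₗ[F] V) v} : Set V)
        have h3 : ({(t : V →ₗ[F] V) v} : Set V).ncard = 1 := Set.ncard_singleton _
        omega
      have hperm : Nat.card (Equiv.Perm Δ) ∣ 6 := by
        letI : Fintype Δ := Fintype.ofFinite _
        rw [Nat.card_eq_fintype_card, Fintype.card_perm]
        have hle : Fintype.card Δ ≤ 3 := by
          rwa [← Nat.card_eq_fintype_card]
        exact dvd_trans (Nat.factorial_dvd_factorial hle) (by norm_num [Nat.factorial])
      have : (4 : ℕ) ∣ 6 := by
        have h4Q : (4 : ℕ) ∣ Nat.card Q := by rw [hQ]; norm_num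
        exact dvd_trans (dvd_trans h4Q hd1) hperm
      norm_num at this
    · rw [← MonoidHom.ker_eq_bot_iff] at hinj
      obtain ⟨a, ha⟩ := Subgroup.ne_bot_iff_exists_ne_one.mp hinj
      set q₀ : Q := (a : Q) with hq₀_def
      have hq₀ne : q₀ ≠ 1 := by
        intro h
        exact ha (Subtype.ext h)
      have hφq₀ : φ q₀ = 1 := a.2
      have hfix : ∀ y : V, y ∈ Δ → (((q₀ : S) : affPerm H) : Equiv.Perm V) y = y := by
        intro y hy
        have h := congrArg (fun e : Equiv.Perm Δ => (e ⟨y, hy⟩ : V)) hφq₀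
        simpa [hφ_def] using h
      obtain ⟨h, hH, w, hw⟩ := ((q₀ : S) : affPerm H).2
      have hw0 : w = 0 := by
        have h0 := hfix 0 h0Δ
        rw [hw 0, map_zero, zero_add] at h0
        exact h0
      have hh1 : h = 1 := by
        apply hv h hH
        have hvfix := hfix v hvΔ
        rw [hw v, hw0, add_zero] at hvfix
        exact hvfix
      apply hq₀ne
      refine Subtype.ext (Subtype.ext (Subtype.ext (Equiv.ext fun y => ?_)))
      show (((q₀ : S) : affPerm H) : Equiv.Perm V) y = y
      rw [hw y, hh1, hw0]
      simp
  -- 4 divides the order of G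
  have hι : Function.Injective (fun h : H => (⟨unitPerm h, unitPerm_mem h.2⟩ : affPerm H)) := by
    intro a b hab
    have h1 : unitPerm (a : (V →ₗ[F] V)ˣ) = unitPerm (b : (V →ₗ[F] V)ˣ) :=
      congrArg Subtype.val hab
    refine Subtype.ext (Units.ext (LinearMap.ext fun y => ?_))
    exact congrArg (fun e : Equiv.Perm V => e y) h1
  have hιhom : Nat.card H ∣ Nat.card (affPerm H) := by
    refine Subgroup.card_dvd_of_injective
      { toFun := fun h : H => (⟨unitPerm h, unitPerm_mem h.2⟩ : affPerm H)
        map_one' := Subtype.ext (Equiv.ext fun y => by simp)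
        map_mul' := fun a b => Subtype.ext (Equiv.ext fun y => by
          show (((a * b : H) : (V →ₗ[F] V)ˣ) : V →ₗ[F] V) y =
              ((a : (V →ₗ[F] V)ˣ) : V →ₗ[F] V) (((b : (V →ₗ[F] V)ˣ) : V →ₗ[F] V) y)
          rw [← Module.End.mul_apply, ← Units.val_mul]
          rfl) } hι
  have h4H : (4 : ℕ) ∣ Nat.card H := by
    rw [← hP4]
    exact Subgroup.card_subgroup_dvd_card _
  have h4G : (4 : ℕ) ∣ Nat.card (affPerm H) := dvd_trans h4H hιhom
  -- cardinalities are positive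
  have hS0 : Nat.card S ≠ 0 := Nat.card_pos.ne'
  have hG0 : Nat.card (affPerm H) ≠ 0 := Nat.card_pos.ne'
  -- compute the 2-parts
  have hfS : (Nat.card S).factorization 2 = 1 := by
    have hge : 1 ≤ (Nat.card S).factorization 2 := by
      rw [← Nat.Prime.pow_dvd_iff_le_factorization Nat.prime_two hS0]
      simpa using h2S
    have hle : (Nat.card S).factorization 2 ≤ 1 := by
      by_contra hcon
      push_neg at hcon
      apply h4S
      have : (2 : ℕ) ^ 2 ∣ Nat.card S := by
        rw [Nat.Prime.pow_dvd_iff_le_factorization Nat.prime_two hS0]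
        omega
      simpa using this
    omega
  have hfG : 2 ≤ (Nat.card (affPerm H)).factorization 2 := by
    rw [← Nat.Prime.pow_dvd_iff_le_factorization Nat.prime_two hG0]
    simpa using h4G
  refine ⟨Δ, ?_, ?_⟩
  · rw [pPart, hfS]
    norm_num
  · rw [pPart, pPart, hfS]
    calc (2 : ℕ) ^ 1 < 2 ^ 2 := by norm_num
    _ ≤ 2 ^ (Nat.card (affPerm H)).factorization 2 := Nat.pow_le_pow_right (by norm_num) hfG
end

section
/- Let G be a finite group acting faithfully on a finite set Ω with |Ω| = n, let p be a prime, and let P be a Sylow p-subgroup of G that is not elementary abelian. Let z be an element of order p in Φ(P) ∩ Z(P) (the intersection of the Frattini subgroup and the center of P), and let f be the number of fixed points of z on Ω. If |G : N_G(P)| < 2^{(n−f)(1/p − 1/p²)}, then (G, Ω) is p-moderate. -/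
open Pointwise

section Aux

open MulAction

variable {K X : Type*} [Group K] [MulAction K X]

private lemma quot_mk_smul (k : K) (x : X) :
    (Quotient.mk'' (k • x) : orbitRel.Quotient K X) = Quotient.mk'' x :=
  Quotient.sound' ((MulAction.orbitRel_apply).2 (MulAction.mem_orbit x k))

private noncomputable def invSetEquiv :
    {Δ : Set X // ∀ k : K, k • Δ = Δ} ≃ Set (orbitRel.Quotient K X) where
  toFun Δ := Quotient.mk'' '' Δ.1
  invFun S := ⟨Quotient.mk'' ⁻¹' S, fun k => by
    ext x
    rw [Set.mem_smul_set_iff_inv_smul_mem, Set.mem_preimage, Set.mem_preimage, quot_mk_smul]⟩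
  left_inv := by
    rintro ⟨Δ, hΔ⟩
    apply Subtype.ext
    ext x
    simp only [Set.mem_preimage, Set.mem_image]
    constructor
    · rintro ⟨y, hy, he⟩
      obtain ⟨k, rfl⟩ : y ∈ orbit K x := (MulAction.orbitRel_apply).1 (Quotient.exact' he)
      rw [← hΔ k⁻¹, Set.mem_inv_smul_set_iff]
      exact hy
    · exact fun h => ⟨x, h, rfl⟩
  right_inv S := Set.image_preimage_eq S Quotient.mk''_surjective

private lemma card_invariant_sets [Finite X] :
    Nat.card {Δ : Set X // ∀ k : K, k • Δ = Δ} = 2 ^ Nat.card (orbitRel.Quotient K X) := by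
  calc Nat.card {Δ : Set X // ∀ k : K, k • Δ = Δ}
      = Nat.card (Set (orbitRel.Quotient K X)) := Nat.card_congr invSetEquiv
    _ = Nat.card (orbitRel.Quotient K X → Bool) :=
        Nat.card_congr (Equiv.arrowCongr (Equiv.refl _) Equiv.propEquivBool)
    _ = 2 ^ Nat.card (orbitRel.Quotient K X) := by
        rw [Nat.card_fun]
        congr 1
        simp [Nat.card_eq_fintype_card]

private lemma natCard_eq_sum_orbits (K X : Type*) [Group K] [MulAction K X] [Finite X]
    [Fintype (orbitRel.Quotient K X)] :
    Nat.card X = ∑ θ : orbitRel.Quotient K X, Nat.card θ.orbit := by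
  classical
  rw [Nat.card_congr (selfEquivSigmaOrbits' K X)]
  letI : ∀ θ : orbitRel.Quotient K X, Fintype θ.orbit := fun _ => Fintype.ofFinite _
  rw [Nat.card_eq_fintype_card, Fintype.card_sigma]
  simp [Nat.card_eq_fintype_card]

private lemma pred_orbit_all (pred : X → Prop)
    (hcompat : ∀ (k : K) (x : X), pred x → pred (k • x)) {θ : orbitRel.Quotient K X}
    {x y : X} (hx : x ∈ θ.orbit) (hy : y ∈ θ.orbit) (hpx : pred x) : pred y := by
  have h : (Quotient.mk'' y : orbitRel.Quotient K X) = Quotient.mk'' x :=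
    (orbitRel.Quotient.mem_orbit.1 hy).trans (orbitRel.Quotient.mem_orbit.1 hx).symm
  obtain ⟨k, rfl⟩ : y ∈ orbit K x := (MulAction.orbitRel_apply).1 (Quotient.exact' h)
  exact hcompat k x hpx

private lemma natCard_fixed_eq_sum (K X : Type*) [Group K] [MulAction K X] [Finite X]
    [Fintype (orbitRel.Quotient K X)] (pred : X → Prop)
    [DecidablePred fun θ : orbitRel.Quotient K X => ∀ x ∈ θ.orbit, pred x]
    (hcompat : ∀ (k : K) (x : X), pred x → pred (k • x)) :
    Nat.card {x : X // pred x} =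
      ∑ θ ∈ Finset.univ.filter (fun θ : orbitRel.Quotient K X => ∀ x ∈ θ.orbit, pred x),
        Nat.card θ.orbit := by
  classical
  have e1 : {x : X // pred x} ≃ {s : Σ θ : orbitRel.Quotient K X, θ.orbit // pred ↑s.2} :=
    (selfEquivSigmaOrbits' K X).subtypeEquiv (fun x => Iff.rfl)
  have e2 : {s : Σ θ : orbitRel.Quotient K X, θ.orbit // pred ↑s.2} ≃
      {s : Σ θ : orbitRel.Quotient K X, θ.orbit // ∀ x ∈ s.1.orbit, pred x} :=
    Equiv.subtypeEquivRight (fun s =>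
      ⟨fun h y hy => pred_orbit_all pred hcompat s.2.2 hy h, fun h => h _ s.2.2⟩)
  have e3 : {s : Σ θ : orbitRel.Quotient K X, θ.orbit // ∀ x ∈ s.1.orbit, pred x} ≃
      Σ θ : {θ : orbitRel.Quotient K X // ∀ x ∈ θ.orbit, pred x}, θ.1.orbit :=
    { toFun := fun s => ⟨⟨s.1.1, s.2⟩, s.1.2⟩
      invFun := fun t => ⟨⟨t.1.1, t.2⟩, t.1.2⟩
      left_inv := by rintro ⟨⟨θ, x⟩, h⟩; rfl
      right_inv := by rintro ⟨⟨θ, h⟩, x⟩; rfl }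
  rw [Nat.card_congr ((e1.trans e2).trans e3)]
  letI : ∀ θ : orbitRel.Quotient K X, Fintype θ.orbit := fun _ => Fintype.ofFinite _
  rw [Nat.card_eq_fintype_card, Fintype.card_sigma]
  have hsub := Finset.sum_subtype (p := fun θ : orbitRel.Quotient K X => ∀ x ∈ θ.orbit, pred x) (F := inferInstance)
    (Finset.univ.filter (fun θ : orbitRel.Quotient K X => ∀ x ∈ θ.orbit, pred x))
    (fun θ => by simp) (fun θ : orbitRel.Quotient K X => Nat.card θ.orbit)
  rw [hsub]
  simp [Nat.card_eq_fintype_card]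

private lemma isCoatom_of_index_prime {p : ℕ} (hp : p.Prime)
    {H : Subgroup K} (h : H.index = p) : IsCoatom H := by
  constructor
  · intro htop
    rw [htop, Subgroup.index_top] at h
    exact hp.one_lt.ne' h.symm
  · intro K' hK'
    have hmul := Subgroup.relIndex_mul_index hK'.le
    rw [h] at hmul
    rcases (Nat.dvd_prime hp).1 (dvd_of_mul_left_eq _ hmul) with h1 | hpp
    · exact Subgroup.index_eq_one.1 h1
    · exfalso
      rw [hpp] at hmul
      have hrel : H.relIndex K' = 1 :=
        Nat.eq_of_mul_eq_mul_right hp.pos (by rw [hmul, one_mul])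
      exact hK'.ne ((Subgroup.relIndex_eq_one.1 hrel).antisymm hK'.le).symm

end Aux
open MulAction in
theorem p_moderate_of_normalizer_index_small
    (p : ℕ) (hp : p.Prime) (G Ω : Type*) [Group G] [Finite G] [Finite Ω]
    [MulAction G Ω] [FaithfulSMul G Ω]
    (P : Sylow p G)
    -- P is not elementary abelian
    (hP : ¬ ((∀ x y : P, x * y = y * x) ∧ ∀ x : P, x ^ p = 1))
    (z : (P : Subgroup G))
    (hz : z ∈ frattini (P : Subgroup G) ⊓ Subgroup.center (P : Subgroup G))
    (hzord : orderOf z = p)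
    -- f is the number of fixed points of z on Ω
    (f : ℕ) (hf : f = Nat.card {ω : Ω // (z : G) • ω = ω})
    (hlt : ((Subgroup.normalizer ((P : Subgroup G) : Set G)).index : ℝ) <
      (2 : ℝ) ^ (((Nat.card Ω : ℝ) - (f : ℝ)) * (1 / (p : ℝ) - 1 / (p : ℝ) ^ 2))) :
    IsPModerate p G Ω := by
  classical
  haveI := Fact.mk hp
  have hz1 : z ∈ frattini ↥(P : Subgroup G) := hz.1
  have hz2 : z ∈ Subgroup.center ↥(P : Subgroup G) := hz.2
  set zG : G := (z : G) with hzGdef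
  have hzG_ord : orderOf zG = p := by rw [Subgroup.orderOf_coe]; exact hzord
  have hp2 : 2 ≤ p := hp.two_le
  set pred : Ω → Prop := fun ω => zG • ω = ω with hpreddef
  set Z : Subgroup G := Subgroup.zpowers zG with hZdef
  letI fZ : Fintype (orbitRel.Quotient ↥Z Ω) := Fintype.ofFinite _
  letI fP : Fintype (orbitRel.Quotient (↥(P : Subgroup G)) Ω) := Fintype.ofFinite _
  -- smul of subgroup elements on sets
  have subcoe : ∀ (H : Subgroup G) (k : ↥H) (Δ : Set Ω), k • Δ = (k : G) • Δ := by
    intro H k Δ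
    ext x
    simp only [Set.mem_smul_set, Subgroup.smul_def]
  -- compatibility of pred with the two actions
  have compatZ : ∀ (k : ↥Z) (ω : Ω), pred ω → pred (k • ω) := by
    rintro ⟨k, hk⟩ ω hω
    obtain ⟨m, rfl⟩ := Subgroup.mem_zpowers_iff.1 hk
    show zG • ((zG ^ m : G) • ω) = (zG ^ m : G) • ω
    rw [smul_smul, ((Commute.refl zG).zpow_right m).eq, ← smul_smul, hω]
  have compatP : ∀ (q : (↥(P : Subgroup G))) (ω : Ω), pred ω → pred (q • ω) := by
    intro q ω hω
    have hcomm : (q : G) * zG = zG * (q : G) := by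
      simpa [hzGdef] using congrArg (Subtype.val) (Subgroup.mem_center_iff.1 hz2 q)
    show zG • ((q : G) • ω) = (q : G) • ω
    rw [smul_smul, ← hcomm, ← smul_smul, hω]
  set TZ : orbitRel.Quotient ↥Z Ω → Prop := fun θ => ∀ x ∈ θ.orbit, pred x with hTZdef
  set TP : orbitRel.Quotient (↥(P : Subgroup G)) Ω → Prop := fun θ => ∀ x ∈ θ.orbit, pred x with hTPdef
  set a : ℕ := (Finset.univ.filter (fun θ => ¬ TZ θ)).card with hadef
  set c1 : ℕ := (Finset.univ.filter TP).card with hc1def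
  set c2 : ℕ := (Finset.univ.filter (fun θ => ¬ TP θ)).card with hc2def
  -- fixed point counts as sums over orbits
  have hfZ : f = ∑ θ ∈ Finset.univ.filter TZ, Nat.card θ.orbit := by
    rw [hf]; exact natCard_fixed_eq_sum ↥Z Ω pred compatZ
  have hfP : f = ∑ θ ∈ Finset.univ.filter TP, Nat.card θ.orbit := by
    rw [hf]; exact natCard_fixed_eq_sum (↥(P : Subgroup G)) Ω pred compatP
  -- orbits of Z have size 1 or p
  have horb_fix : ∀ ω : Ω, pred ω → orbit ↥Z ω = {ω} := by
    intro ω hω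
    apply Set.eq_singleton_iff_unique_mem.2
    constructor
    · exact MulAction.mem_orbit_self ω
    · rintro x ⟨⟨k, hk⟩, rfl⟩
      obtain ⟨m, rfl⟩ := Subgroup.mem_zpowers_iff.1 hk
      have hst : zG ∈ MulAction.stabilizer G ω := hω
      have : (zG ^ m : G) ∈ MulAction.stabilizer G ω := zpow_mem hst m
      exact this
  have hout_mem : ∀ {KK : Type _} [Group KK] [MulAction KK Ω]
      (θ : orbitRel.Quotient KK Ω), θ.out ∈ θ.orbit := by
    intro KK _ _ θ
    exact orbitRel.Quotient.mem_orbit.2 (Quotient.out_eq' θ)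
  have hcard_TZ : ∀ θ : orbitRel.Quotient ↥Z Ω, TZ θ → Nat.card θ.orbit = 1 := by
    intro θ hθ
    rw [orbitRel.Quotient.orbit_eq_orbit_out θ Quotient.out_eq',
      horb_fix _ (hθ _ (hout_mem θ))]
    simp [Nat.card_coe_set_eq]
  have horbZ_dvd : ∀ θ : orbitRel.Quotient ↥Z Ω, Nat.card θ.orbit ∣ p := by
    intro θ
    rw [orbitRel.Quotient.orbit_eq_orbit_out θ Quotient.out_eq',
      Nat.card_coe_set_eq, ← MulAction.index_stabilizer]
    rw [← hzG_ord, ← Nat.card_zpowers zG]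
    exact Subgroup.index_dvd_card _
  have hcard_nTZ : ∀ θ : orbitRel.Quotient ↥Z Ω, ¬ TZ θ → Nat.card θ.orbit = p := by
    intro θ hθ
    rcases (Nat.dvd_prime hp).1 (horbZ_dvd θ) with h1 | hpp
    · exfalso
      apply hθ
      have hsub : Subsingleton θ.orbit := (Nat.card_eq_one_iff_unique.1 h1).1
      have hfix : pred θ.out := by
        have hm : zG • θ.out ∈ θ.orbit := by
          have := orbitRel.Quotient.mapsTo_smul_orbit
            (⟨zG, Subgroup.mem_zpowers zG⟩ : ↥Z) θ (hout_mem θ)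
          simpa [Subgroup.smul_def] using this
        have := hsub.elim ⟨zG • θ.out, hm⟩ ⟨θ.out, hout_mem θ⟩
        exact congrArg Subtype.val this
      intro x hx
      exact pred_orbit_all pred compatZ (hout_mem θ) hx hfix
    · exact hpp
  -- n = f + a * p
  have hn0 : Nat.card Ω = ∑ θ : orbitRel.Quotient ↥Z Ω, Nat.card θ.orbit :=
    natCard_eq_sum_orbits ↥Z Ω
  rw [← Finset.sum_filter_add_sum_filter_not Finset.univ TZ] at hn0
  have hsum1 : ∑ θ ∈ Finset.univ.filter (fun θ => ¬ TZ θ), Nat.card θ.orbit = a * p := by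
    rw [Finset.sum_congr rfl (fun θ hθ => hcard_nTZ θ (Finset.mem_filter.1 hθ).2)]
    simp [hadef, Finset.sum_const, Nat.smul_one_eq_cast]
  have hn : Nat.card Ω = f + a * p := by rw [hn0, hsum1, ← hfZ]
  -- f equals the number of TZ orbits
  have hfcard : f = (Finset.univ.filter TZ).card := by
    rw [hfZ, Finset.sum_congr rfl (fun θ hθ => hcard_TZ θ (Finset.mem_filter.1 hθ).2)]
    simp
  -- card of the Z orbit space
  have hcardΘZ : Nat.card (orbitRel.Quotient ↥Z Ω) = f + a := by
    rw [Nat.card_eq_fintype_card, ← Finset.card_univ,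
      ← Finset.card_filter_add_card_filter_not (s := Finset.univ) TZ, ← hfcard]
  have hcardA : Nat.card {Δ : Set Ω // ∀ k : ↥Z, k • Δ = Δ} = 2 ^ (f + a) := by
    rw [card_invariant_sets, hcardΘZ]
  -- P side: c1 ≤ f
  have hc1f : c1 ≤ f := by
    rw [hfP, hc1def]
    calc (Finset.univ.filter TP).card = ∑ _θ ∈ Finset.univ.filter TP, 1 := by simp
      _ ≤ ∑ θ ∈ Finset.univ.filter TP, Nat.card θ.orbit := by
          refine Finset.sum_le_sum fun θ _ => ?_
          haveI : Nonempty θ.orbit := (orbitRel.Quotient.nonempty_orbit θ).to_subtype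
          exact Nat.one_le_iff_ne_zero.2 Nat.card_pos.ne'
  -- orbits of P with no fixed point have size at least p^2
  have horbP_big : ∀ θ : orbitRel.Quotient (↥(P : Subgroup G)) Ω, ¬ TP θ → p ^ 2 ≤ Nat.card θ.orbit := by
    intro θ hθ
    have hnfix : ¬ pred θ.out :=
      fun hfix => hθ (fun x hx => pred_orbit_all pred compatP (hout_mem θ) hx hfix)
    have hzstab : z ∉ MulAction.stabilizer (↥(P : Subgroup G)) θ.out := by
      intro hmem
      refine hnfix ?_
      show zG • θ.out = θ.out
      have h0 : z • θ.out = θ.out := MulAction.mem_stabilizer_iff.1 hmem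
      rw [Subgroup.smul_def] at h0
      exact h0
    have hcard : Nat.card θ.orbit = (MulAction.stabilizer (↥(P : Subgroup G)) θ.out).index := by
      rw [orbitRel.Quotient.orbit_eq_orbit_out θ Quotient.out_eq',
        Nat.card_coe_set_eq, ← MulAction.index_stabilizer]
    obtain ⟨m, hm⟩ := IsPGroup.iff_card.1 P.isPGroup'
    have hdvd : (MulAction.stabilizer (↥(P : Subgroup G)) θ.out).index ∣ p ^ m := by
      rw [← hm]; exact Subgroup.index_dvd_card _
    obtain ⟨j, hjm, hjeq⟩ := (Nat.dvd_prime_pow hp).1 hdvd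
    have hj0 : j ≠ 0 := by
      rintro rfl
      rw [pow_zero] at hjeq
      exact hzstab (by rw [Subgroup.index_eq_one.1 hjeq]; exact Subgroup.mem_top z)
    have hj1 : j ≠ 1 := by
      rintro rfl
      rw [pow_one] at hjeq
      exact hzstab (frattini_le_coatom (isCoatom_of_index_prime hp hjeq) hz1)
    rw [hcard, hjeq]
    exact Nat.pow_le_pow_right hp.pos (by omega)
  -- n ≥ f + p^2 * c2
  have hnP0 : Nat.card Ω = ∑ θ : orbitRel.Quotient (↥(P : Subgroup G)) Ω, Nat.card θ.orbit :=
    natCard_eq_sum_orbits (↥(P : Subgroup G)) Ω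
  rw [← Finset.sum_filter_add_sum_filter_not Finset.univ TP] at hnP0
  have hsumP : p ^ 2 * c2 ≤ ∑ θ ∈ Finset.univ.filter (fun θ => ¬ TP θ), Nat.card θ.orbit := by
    rw [hc2def, mul_comm]
    calc (Finset.univ.filter fun θ => ¬TP θ).card * p ^ 2
        = ∑ _θ ∈ Finset.univ.filter (fun θ => ¬ TP θ), p ^ 2 := by
          rw [Finset.sum_const, smul_eq_mul, mul_comm]
      _ ≤ _ := Finset.sum_le_sum fun θ hθ => horbP_big θ (Finset.mem_filter.1 hθ).2
  have hfp2 : f + p ^ 2 * c2 ≤ Nat.card Ω := by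
    rw [hnP0, ← hfP]
    exact Nat.add_le_add_left hsumP f
  have hcardΘP : Nat.card (orbitRel.Quotient (↥(P : Subgroup G)) Ω) = c1 + c2 := by
    rw [Nat.card_eq_fintype_card, ← Finset.card_univ,
      ← Finset.card_filter_add_card_filter_not (s := Finset.univ) TP, ← hc1def]
  have hcardAP : Nat.card {Δ : Set Ω // ∀ k : (↥(P : Subgroup G)), k • Δ = Δ} = 2 ^ (c1 + c2) := by
    rw [card_invariant_sets, hcardΘP]
  -- the family of subsets invariant under some Sylow p-subgroup
  set B : Set (Set Ω) := {Δ | ∃ Q : Sylow p G, ∀ k : ↥(Q : Subgroup G), k • Δ = Δ} with hBdef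
  have hBcard : Nat.card B ≤ (Subgroup.normalizer ((P : Subgroup G) : Set G)).index * 2 ^ (c1 + c2) := by
    have hex : ∀ Q : Sylow p G, ∃ g : G, g • P = Q := fun Q => MulAction.exists_smul_eq G P Q
    choose gQ hgQ using hex
    have hmem : ∀ Δ : B, ∃ Q : Sylow p G,
        ∀ k : ↥(Q : Subgroup G), k • (Δ : Set Ω) = (Δ : Set Ω) := fun Δ => Δ.2
    choose QΔ hQΔ using hmem
    have hinvAP : ∀ Δ : B, ∀ k : (↥(P : Subgroup G)),
        k • ((gQ (QΔ Δ))⁻¹ • (Δ : Set Ω)) = (gQ (QΔ Δ))⁻¹ • (Δ : Set Ω) := by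
      intro Δ k
      set g := gQ (QΔ Δ) with hgdef
      have hk : g * (k : G) * g⁻¹ ∈ ((QΔ Δ : Sylow p G) : Subgroup G) := by
        rw [← hgQ (QΔ Δ)]
        have h1 : (MulAut.conj g) (k : G) ∈ (MulAut.conj g) • (P : Subgroup G) :=
          Subgroup.smul_mem_pointwise_smul _ _ _ k.2
        rw [Sylow.coe_subgroup_smul]
        simpa [MulAut.conj_apply] using h1
      have h2 := hQΔ Δ ⟨_, hk⟩
      rw [subcoe] at h2 ⊢
      rw [smul_smul]
      calc ((k : G) * g⁻¹) • (Δ : Set Ω)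
          = (g⁻¹ * (g * (k : G) * g⁻¹)) • (Δ : Set Ω) := by
            congr 1
            group
        _ = g⁻¹ • ((g * (k : G) * g⁻¹) • (Δ : Set Ω)) := (smul_smul _ _ _).symm
        _ = g⁻¹ • (Δ : Set Ω) := by rw [h2]
    set Fmap : B → Sylow p G × {Δ : Set Ω // ∀ k : (↥(P : Subgroup G)), k • Δ = Δ} :=
      fun Δ => (QΔ Δ, ⟨(gQ (QΔ Δ))⁻¹ • (Δ : Set Ω), hinvAP Δ⟩) with hFdef
    have hinj : Function.Injective Fmap := by
      intro Δ₁ Δ₂ h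
      have h1 : QΔ Δ₁ = QΔ Δ₂ := congrArg Prod.fst h
      have h2 := congrArg (fun s : Sylow p G ×
        {Δ : Set Ω // ∀ k : (↥(P : Subgroup G)), k • Δ = Δ} => (s.2 : Set Ω)) h
      simp only [hFdef] at h2
      rw [h1] at h2
      exact Subtype.ext (smul_left_cancel _ h2)
    calc Nat.card B
        ≤ Nat.card (Sylow p G × {Δ : Set Ω // ∀ k : (↥(P : Subgroup G)), k • Δ = Δ}) :=
          Nat.card_le_card_of_injective Fmap hinj
      _ = Nat.card (Sylow p G) * Nat.card {Δ : Set Ω // ∀ k : (↥(P : Subgroup G)), k • Δ = Δ} :=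
          Nat.card_prod _ _
      _ = (Subgroup.normalizer ((P : Subgroup G) : Set G)).index * 2 ^ (c1 + c2) := by
          rw [Sylow.card_eq_index_normalizer P, hcardAP]
          rfl
  -- numeric facts
  have hp2c2 : p * c2 ≤ a := by
    have h1 := hfp2
    rw [hn] at h1
    have h2 : p ^ 2 * c2 ≤ a * p := by omega
    have h3 : (p * c2) * p ≤ a * p := by
      calc (p * c2) * p = p ^ 2 * c2 := by ring
        _ ≤ a * p := h2
    exact Nat.le_of_mul_le_mul_right h3 hp.pos
  have hc2a : c2 ≤ a := le_trans (Nat.le_mul_of_pos_left c2 hp.pos) hp2c2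
  -- index bound over the reals
  have hidx : (Subgroup.normalizer ((P : Subgroup G) : Set G)).index < 2 ^ (a - c2) := by
    have hpR : (0:ℝ) < p := by exact_mod_cast hp.pos
    have hnf : (Nat.card Ω : ℝ) - f = (a : ℝ) * p := by
      rw [hn]; push_cast; ring
    have hexp : ((a:ℝ) * p) * (1/(p:ℝ) - 1/(p:ℝ)^2) = a - a / p := by
      field_simp
    have hle2 : (a:ℝ) - a/p ≤ ((a - c2 : ℕ) : ℝ) := by
      rw [Nat.cast_sub hc2a]
      have hcc : (c2 : ℝ) ≤ a / p := by
        rw [le_div_iff₀ hpR]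
        exact_mod_cast Nat.mul_comm p c2 ▸ hp2c2
      linarith
    have h2R : ((Subgroup.normalizer ((P : Subgroup G) : Set G)).index : ℝ) < (2:ℝ) ^ (((a - c2 : ℕ)) : ℝ) := by
      refine lt_of_lt_of_le hlt ?_
      have hmono : ((Nat.card Ω : ℝ) - f) * (1/(p:ℝ) - 1/(p:ℝ)^2) ≤ ((a - c2 : ℕ) : ℝ) := by
        rw [hnf, hexp]
        exact hle2
      exact (Real.rpow_le_rpow_left_iff (by norm_num : (1:ℝ) < 2)).2 hmono
    rw [Real.rpow_natCast] at h2R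
    exact_mod_cast h2R
  -- strict comparison of the two counts
  have hBA : Nat.card B < Nat.card {Δ : Set Ω // ∀ k : ↥Z, k • Δ = Δ} := by
    rw [hcardA]
    refine lt_of_le_of_lt hBcard ?_
    calc (Subgroup.normalizer ((P : Subgroup G) : Set G)).index * 2 ^ (c1 + c2)
        ≤ (Subgroup.normalizer ((P : Subgroup G) : Set G)).index * 2 ^ (f + c2) :=
          Nat.mul_le_mul_left _ (Nat.pow_le_pow_right (by norm_num) (by omega))
      _ < 2 ^ (a - c2) * 2 ^ (f + c2) :=
          mul_lt_mul_of_pos_right hidx (by positivity)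
      _ = 2 ^ (f + a) := by
          rw [← pow_add]
          congr 1
          omega
  -- a z-invariant set that is not invariant under any Sylow p-subgroup
  obtain ⟨Δ, hΔinv, hΔnB⟩ : ∃ Δ : Set Ω, (∀ k : ↥Z, k • Δ = Δ) ∧ Δ ∉ B := by
    by_contra hcon
    push_neg at hcon
    have hle : Nat.card {Δ : Set Ω // ∀ k : ↥Z, k • Δ = Δ} ≤ Nat.card B :=
      Nat.card_le_card_of_injective (fun Δ => ⟨Δ.1, hcon Δ.1 Δ.2⟩)
        (fun Δ₁ Δ₂ h => by
          have h' := congrArg Subtype.val h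
          exact Subtype.ext h')
    omega
  -- conclusion
  have hzS : zG ∈ MulAction.stabilizer G Δ := by
    have h0 := hΔinv ⟨zG, Subgroup.mem_zpowers zG⟩
    rw [subcoe] at h0
    exact h0
  have hfinS : Nat.card ↥(MulAction.stabilizer G Δ) ≠ 0 := Nat.card_pos.ne'
  have hGfin : Nat.card G ≠ 0 := Nat.card_pos.ne'
  have hdvdS : p ∣ Nat.card ↥(MulAction.stabilizer G Δ) := by
    rw [← hzG_ord]
    exact Subgroup.orderOf_dvd_natCard _ hzS
  refine ⟨Δ, ?_, ?_⟩
  · simp only [pPart]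
    have hpos := hp.factorization_pos_of_dvd hfinS hdvdS
    exact Nat.one_lt_pow hpos.ne' hp.one_lt
  · simp only [pPart]
    have hleS : (Nat.card ↥(MulAction.stabilizer G Δ)).factorization p ≤
        (Nat.card G).factorization p := by
      have hd := (Nat.factorization_le_iff_dvd hfinS hGfin).2
        (Subgroup.card_subgroup_dvd_card _)
      exact hd p
    refine lt_of_le_of_ne (Nat.pow_le_pow_right hp.pos hleS) ?_
    intro heq
    have hexpS : (Nat.card ↥(MulAction.stabilizer G Δ)).factorization p =
        (Nat.card G).factorization p := Nat.pow_right_injective hp2 heq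
    obtain ⟨R⟩ : Nonempty (Sylow p ↥(MulAction.stabilizer G Δ)) := inferInstance
    have hcards : Nat.card
        ↥(Subgroup.map (MulAction.stabilizer G Δ).subtype (R : Subgroup _))
        = p ^ (Nat.card G).factorization p := by
      rw [← Nat.card_congr (Subgroup.equivMapOfInjective (R : Subgroup _)
        (MulAction.stabilizer G Δ).subtype (Subgroup.subtype_injective _)).toEquiv]
      rw [Sylow.card_eq_multiplicity, hexpS]
    apply hΔnB
    refine ⟨Sylow.ofCard _ hcards, ?_⟩
    intro k
    have hkmem : (k : G) ∈ Subgroup.map (MulAction.stabilizer G Δ).subtype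
      (R : Subgroup _) := k.2
    obtain ⟨r, _, hrk⟩ := hkmem
    have hkS : (k : G) ∈ MulAction.stabilizer G Δ := hrk ▸ r.2
    rw [subcoe]
    exact hkS
end

section
/- Let p be a prime and let m be a natural number with m < p². Then every p-subgroup of the symmetric group Sym(m) on m letters is elementary abelian; that is, it is abelian and every element of it has order dividing p. -/
open MulAction

lemma comm_of_card_dvd_prime' {G : Type*} [Group G] [Finite G] {p : ℕ} (hp : p.Prime)
    (h : Nat.card G ∣ p) (a b : G) : a * b = b * a := by
  rcases (Nat.dvd_prime hp).mp h with h1 | h1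
  · haveI : Subsingleton G := by
      have := Nat.card_eq_one_iff_unique.mp h1
      exact this.1
    exact Subsingleton.elim _ _
  · haveI := Fact.mk hp
    haveI : IsCyclic G := isCyclic_of_prime_card h1
    letI := IsCyclic.commGroup (α := G)
    exact mul_comm a b

theorem p_subgroup_of_sym_lt_p_sq_elementary_abelian
    (p : ℕ) (hp : p.Prime) (m : ℕ) (hm : m < p ^ 2)
    (Q : Subgroup (Equiv.Perm (Fin m))) (hQ : IsPGroup p Q) :
    (∀ x y : Q, x * y = y * x) ∧ ∀ x : Q, x ^ p = 1 := by
  haveI := Fact.mk hp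
  -- key: for each a, the image of Q in Perm (orbit Q a) has card dividing p
  have key : ∀ a : Fin m,
      Nat.card (MulAction.toPermHom Q (orbit Q a)).range ∣ p := by
    intro a
    set φ := MulAction.toPermHom Q (orbit Q a) with hφ
    have hR : IsPGroup p φ.range :=
      IsPGroup.of_surjective hQ φ.rangeRestrict φ.rangeRestrict_surjective
    -- orbit card divides card Q, hence is a power of p, at most m < p^2, so ≤ p
    obtain ⟨n, hn⟩ := hQ.exists_card_eq
    have horb_dvd : Nat.card (orbit Q a) ∣ Nat.card Q := by
      rw [Nat.card_congr (orbitEquivQuotientStabilizer Q a)]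
      exact (stabilizer Q a).card_quotient_dvd_card
    obtain ⟨j, hj, hoj⟩ := (Nat.dvd_prime_pow hp).mp (hn ▸ horb_dvd)
    letI : Fintype (orbit Q a) := Fintype.ofFinite _
    have horb_le_m : Nat.card (orbit Q a) ≤ m := by
      rw [Nat.card_eq_fintype_card]
      calc Fintype.card (orbit Q a) ≤ Fintype.card (Fin m) :=
            Fintype.card_le_of_injective _ Subtype.val_injective
        _ = m := Fintype.card_fin m
    have hj1 : j ≤ 1 := by
      by_contra hc
      push_neg at hc
      have h5 : p ^ 2 ≤ p ^ j := Nat.pow_le_pow_right hp.pos hc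
      omega
    have horb_le_p : Nat.card (orbit Q a) ≤ p := by
      rw [hoj]
      calc p ^ j ≤ p ^ 1 := Nat.pow_le_pow_right hp.pos hj1
        _ = p := pow_one p
    -- card of range is a power of p dividing (card orbit)! which divides p!
    obtain ⟨k, hk⟩ := hR.exists_card_eq
    have hdvd1 : Nat.card φ.range ∣ Nat.card (Equiv.Perm (orbit Q a)) :=
      Subgroup.card_subgroup_dvd_card _
    have hcardperm : Nat.card (Equiv.Perm (orbit Q a)) = Nat.factorial (Nat.card (orbit Q a)) := by
      rw [Nat.card_eq_fintype_card, Nat.card_eq_fintype_card, Fintype.card_perm]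
    have hdvd2 : Nat.card φ.range ∣ Nat.factorial p := by
      exact dvd_trans (hcardperm ▸ hdvd1) (Nat.factorial_dvd_factorial horb_le_p)
    -- p^2 does not divide p!
    have hp2 : ¬ p ^ 2 ∣ Nat.factorial p := by
      intro hdd
      have h1 : Nat.factorial p = p * Nat.factorial (p-1) :=
        (Nat.mul_factorial_pred hp.ne_zero).symm
      have h2 : p ∣ Nat.factorial (p-1) := by
        have : p * p ∣ p * Nat.factorial (p-1) := by rw [← h1, ← sq]; exact hdd
        exact (mul_dvd_mul_iff_left hp.pos.ne').mp this
      have h3 := (Nat.Prime.dvd_factorial hp).mp h2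
      have h4 := hp.pos
      omega
    have hk1 : k ≤ 1 := by
      by_contra hc
      push_neg at hc
      exact hp2 (dvd_trans (pow_dvd_pow p hc) (hk ▸ hdvd2))
    rw [hk]
    calc p ^ k ∣ p ^ 1 := pow_dvd_pow p hk1
      _ = p := pow_one p
  -- pointwise consequences
  constructor
  · intro x y
    refine Subtype.ext (Equiv.ext fun a => ?_)
    set φ := MulAction.toPermHom Q (orbit Q a) with hφ
    have hc := comm_of_card_dvd_prime' hp (key a)
      (⟨φ x, ⟨x, rfl⟩⟩ : φ.range) (⟨φ y, ⟨y, rfl⟩⟩ : φ.range)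
    have hc' : φ x * φ y = φ y * φ x := congrArg Subtype.val hc
    have := congrFun (congrArg (fun (e : Equiv.Perm (orbit Q a)) => (e : orbit Q a → orbit Q a))
      hc') ⟨a, mem_orbit_self a⟩
    have h2 := congrArg Subtype.val this
    simpa [φ, MulAction.toPermHom, Subgroup.smul_def, Equiv.Perm.smul_def] using h2
  · intro x
    refine Subtype.ext (Equiv.ext fun a => ?_)
    set φ := MulAction.toPermHom Q (orbit Q a) with hφ
    have hord : (⟨φ x, ⟨x, rfl⟩⟩ : φ.range) ^ p = 1 := by
      have h1 : orderOf (⟨φ x, ⟨x, rfl⟩⟩ : φ.range) ∣ p :=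
        dvd_trans (orderOf_dvd_natCard _) (key a)
      exact orderOf_dvd_iff_pow_eq_one.mp h1
    have hφx : (φ x) ^ p = 1 := by
      have := congrArg Subtype.val hord
      simpa using this
    have hφxp : φ (x ^ p) = 1 := by rw [map_pow]; exact hφx
    have := congrFun (congrArg (fun (e : Equiv.Perm (orbit Q a)) => (e : orbit Q a → orbit Q a))
      hφxp) ⟨a, mem_orbit_self a⟩
    have h2 := congrArg Subtype.val this
    simpa [φ, MulAction.toPermHom, Subgroup.smul_def, Equiv.Perm.smul_def] using h2
end

section
/- Let K = GF(8) be the field with 8 elements and let J be the group of all permutations of K of the form x ↦ a·x^{2^i} + b with a ∈ K^×, b ∈ K, and i ∈ {0, 1, 2} (the full affine semilinear group of K). Then |J| = 168, J has exactly 28 Sylow 3-subgroups, and every Sylow 3-subgroup of J has exactly 4 orbits on K, with orbit sizes 1, 1, 3, 3. -/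
namespace GF8SylowAux

open Equiv MulAction Subgroup

local notation "K" => GaloisField 2 3

noncomputable instance : Fintype (GaloisField 2 3) := Fintype.ofFinite _

instance : Fact (Nat.Prime 3) := ⟨by norm_num⟩

lemma cardK : Nat.card K = 8 := by
  have := GaloisField.card 2 3 (by norm_num)
  simpa using this

lemma fcardK : Fintype.card K = 8 := by rw [← Nat.card_eq_fintype_card, cardK]

lemma cardKu : Nat.card Kˣ = 7 := by rw [Nat.card_units, cardK]

lemma pow8 (x : K) : x ^ 8 = x := by
  have := FiniteField.pow_card x
  rwa [fcardK] at this

lemma apow7 (a : Kˣ) : (a : K) ^ 7 = 1 := by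
  have h : a ^ 7 = 1 := by
    have := pow_card_eq_one' (G := Kˣ) (x := a)
    rwa [cardKu] at this
  have := congrArg Units.val h
  simpa using this

lemma sq_add (x y : K) : (x + y) ^ 2 = x ^ 2 + y ^ 2 := add_pow_char x y 2

noncomputable def frob : Equiv.Perm K := (frobeniusEquiv K 2).toEquiv

lemma frob_apply (x : K) : frob x = x ^ 2 := rfl

lemma frob_pow_apply (n : ℕ) : ∀ x : K, (frob ^ n) x = x ^ 2 ^ n := by
  induction n with
  | zero => intro x; simp
  | succ n ih =>
      intro x
      rw [pow_succ, Equiv.Perm.mul_apply, frob_apply, ih, ← pow_mul, pow_succ']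

noncomputable def fp (a : Kˣ) (b : K) (i : Fin 3) : Equiv.Perm K :=
  Equiv.addRight b * Equiv.mulLeft₀ (a : K) a.ne_zero * frob ^ (i : ℕ)

lemma fp_apply (a : Kˣ) (b : K) (i : Fin 3) (x : K) :
    fp a b i x = (a : K) * x ^ 2 ^ (i : ℕ) + b := by
  simp [fp, Equiv.Perm.mul_apply, frob_pow_apply]

lemma fp_one : fp 1 0 0 = 1 := by
  ext x
  simp [fp_apply]

lemma fp_injective :
    Function.Injective (fun t : Kˣ × K × Fin 3 => fp t.1 t.2.1 t.2.2) := by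
  rintro ⟨a, b, i⟩ ⟨a', b', i'⟩ h
  simp only at h
  have hpt : ∀ x : K, (a : K) * x ^ 2 ^ (i : ℕ) + b = (a' : K) * x ^ 2 ^ (i' : ℕ) + b' := by
    intro x
    rw [← fp_apply, ← fp_apply, h]
  have hb : b = b' := by
    have := hpt 0
    simpa [zero_pow (Nat.two_pow_pos (i : ℕ)).ne', zero_pow (Nat.two_pow_pos (i' : ℕ)).ne']
      using this
  have ha : a = a' := by
    have := hpt 1
    rw [one_pow, one_pow, mul_one, mul_one, hb] at this
    exact Units.ext (by simpa using this)
  -- now the frobenius powers agree on all of K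
  have hpow : ∀ x : K, x ^ 2 ^ (i : ℕ) = x ^ 2 ^ (i' : ℕ) := by
    intro x
    have := hpt x
    rw [hb, ha] at this
    have := add_right_cancel this
    exact mul_left_cancel₀ (a'.ne_zero) this
  obtain ⟨g, hg⟩ := IsCyclic.exists_ofOrder_eq_natCard (α := Kˣ)
  rw [cardKu] at hg
  have hgu : g ^ 2 ^ (i : ℕ) = g ^ 2 ^ (i' : ℕ) := by
    have := hpow (g : K)
    exact Units.ext (by push_cast; simpa using this)
  have hmod : 2 ^ (i : ℕ) ≡ 2 ^ (i' : ℕ) [MOD 7] := by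
    rw [← hg]
    exact pow_eq_pow_iff_modEq.mp hgu
  have hii : i = i' := by
    have h3 : (i : ℕ) < 3 := i.isLt
    have h3' : (i' : ℕ) < 3 := i'.isLt
    have hiv : (i : ℕ) = 0 ∨ (i : ℕ) = 1 ∨ (i : ℕ) = 2 := by omega
    have hiv' : (i' : ℕ) = 0 ∨ (i' : ℕ) = 1 ∨ (i' : ℕ) = 2 := by omega
    apply Fin.ext
    rcases hiv with h|h|h <;> rcases hiv' with h'|h'|h' <;>
      rw [h, h'] <;> rw [h, h'] at hmod <;> revert hmod <;> decide
  exact Prod.ext ha (Prod.ext hb hii)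

lemma cube_apply (a : Kˣ) (b : K) (σ : Equiv.Perm K) (hσ : σ = fp a b 1) (x : K) :
    (σ ^ 3) x = x + ((a : K) ^ 3 * b ^ 4 + (a : K) * b ^ 2 + b) := by
  subst hσ
  have h3 : (fp a b 1) ^ 3 = fp a b 1 * fp a b 1 * fp a b 1 := by
    rw [pow_succ, pow_succ, pow_one]
  rw [h3]
  simp only [Equiv.Perm.mul_apply, fp_apply]
  norm_num
  have e1 : ((a : K) * x ^ 2 + b) ^ 2 = (a : K) ^ 2 * x ^ 4 + b ^ 2 := by
    rw [sq_add]; ring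
  rw [e1]
  have e2 : ((a : K) * ((a : K) ^ 2 * x ^ 4 + b ^ 2) + b) ^ 2
      = (a : K) ^ 2 * ((a : K) ^ 2 * x ^ 4 + b ^ 2) ^ 2 + b ^ 2 := by
    rw [sq_add]; ring
  rw [e2]
  have e3 : ((a : K) ^ 2 * x ^ 4 + b ^ 2) ^ 2 = (a : K) ^ 4 * x ^ 8 + b ^ 4 := by
    rw [sq_add]; ring
  rw [e3, pow8 x]
  have := apow7 a
  calc (a : K) * ((a : K) ^ 2 * ((a : K) ^ 4 * x + b ^ 4) + b ^ 2) + b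
      = ((a : K) ^ 7) * x + ((a : K) ^ 3 * b ^ 4 + (a : K) * b ^ 2 + b) := by ring
    _ = x + ((a : K) ^ 3 * b ^ 4 + (a : K) * b ^ 2 + b) := by rw [this, one_mul]

lemma two_eq_zero : (2 : K) = 0 := by
  have : CharP K 2 := inferInstance
  exact_mod_cast CharP.cast_eq_zero K 2

lemma char_add_self (x : K) : x + x = 0 := by
  have : x + x = 2 * x := by ring
  rw [this, two_eq_zero, zero_mul]

lemma i0_trivial (a : Kˣ) (b : K) (h : (fp a b 0) ^ 3 = 1) : fp a b 0 = 1 := by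
  have hpt : ∀ x : K, (a : K) * ((a : K) * ((a : K) * x + b) + b) + b = x := by
    intro x
    have h3 : (fp a b 0) ^ 3 = fp a b 0 * fp a b 0 * fp a b 0 := by
      rw [pow_succ, pow_succ, pow_one]
    have := congrArg (fun σ : Equiv.Perm K => σ x) h
    rw [h3] at this
    simpa [Equiv.Perm.mul_apply, fp_apply] using this
  have h0 := hpt 0
  have h1 := hpt 1
  rw [mul_zero, zero_add] at h0
  have ha3 : (a : K) ^ 3 = 1 := by
    have e1 : (a:K) * ((a:K) * ((a:K) * 1 + b) + b) + b
        = (a : K) ^ 3 + ((a:K)^2 * b + (a:K) * b + b) := by ring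
    rw [e1] at h1
    have e0 : (a:K) * ((a:K) * b + b) + b = (a:K)^2 * b + (a:K) * b + b := by ring
    rw [e0] at h0
    linear_combination h1 - h0
  have hau : a ^ 3 = 1 := Units.ext (by push_cast; simpa using ha3)
  have ha1 : a = 1 := by
    have hd3 : orderOf a ∣ 3 := orderOf_dvd_of_pow_eq_one hau
    have hd7 : orderOf a ∣ 7 := by
      have := orderOf_dvd_natCard a
      rwa [cardKu] at this
    have : orderOf a ∣ 1 := Nat.dvd_gcd hd3 hd7
    rw [Nat.dvd_one] at this
    exact orderOf_eq_one_iff.mp this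
  subst ha1
  have hb : b = 0 := by
    have := h0
    simp only [Units.val_one, one_mul] at this
    linear_combination this - char_add_self b
  subst hb
  exact fp_one

/-- three common fixed points of a semilinear map with `i ≠ 0` collapse -/
lemma fixed_collide (a : Kˣ) (b : K) (i : Fin 3) (hi : i ≠ 0) {x y z : K}
    (hx : (a : K) * x ^ 2 ^ (i : ℕ) + b = x)
    (hy : (a : K) * y ^ 2 ^ (i : ℕ) + b = y)
    (hz : (a : K) * z ^ 2 ^ (i : ℕ) + b = z)
    (hxy : x ≠ y) (hxz : x ≠ z) : y = z := by
  set k : ℕ := 2 ^ (i : ℕ) with hk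
  have key : ∀ p q : K, (a : K) * p ^ k + b = p → (a : K) * q ^ k + b = q →
      (a : K) * (p - q) ^ k = p - q := by
    intro p q hp hq
    have : (p - q) ^ k = p ^ k - q ^ k := by
      rw [hk]
      exact sub_pow_char_pow p q (i : ℕ)
    rw [this]
    have hp' : (a : K) * p ^ k = p - b := eq_sub_of_add_eq hp
    have hq' : (a : K) * q ^ k = q - b := eq_sub_of_add_eq hq
    calc (a : K) * (p ^ k - q ^ k) = ((a:K) * p ^ k) - ((a:K) * q ^ k) := by ring
      _ = (p - b) - (q - b) := by rw [hp', hq']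
      _ = p - q := by ring
  have hm : ∃ m : ℕ, k = m + 1 ∧ (m = 1 ∨ m = 3) := by
    have : (i : ℕ) = 1 ∨ (i : ℕ) = 2 := by
      have := i.isLt
      have hne : (i : ℕ) ≠ 0 := fun hc => hi (Fin.ext hc)
      omega
    rcases this with h | h <;> rw [hk, h] <;> [exact ⟨1, by norm_num⟩; exact ⟨3, by norm_num⟩]
  obtain ⟨m, hkm, hm13⟩ := hm
  have hs : x - y ≠ 0 := sub_ne_zero.mpr hxy
  have ht : x - z ≠ 0 := sub_ne_zero.mpr hxz
  set su : Kˣ := Units.mk0 (x - y) hs with hsu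
  set tu : Kˣ := Units.mk0 (x - z) ht with htu
  have hsuk : a * su ^ m = 1 := by
    have hK : (a : K) * (x - y) ^ k = x - y := key x y hx hy
    have : a * su ^ (m + 1) = su := by
      apply Units.ext
      push_cast [hsu]
      rw [← hkm]
      simpa using hK
    rw [pow_succ, ← mul_assoc] at this
    conv_rhs at this => rw [← one_mul su]
    exact mul_right_cancel this
  have htuk : a * tu ^ m = 1 := by
    have hK : (a : K) * (x - z) ^ k = x - z := key x z hx hz
    have : a * tu ^ (m + 1) = tu := by
      apply Units.ext
      push_cast [htu]
      rw [← hkm]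
      simpa using hK
    rw [pow_succ, ← mul_assoc] at this
    conv_rhs at this => rw [← one_mul tu]
    exact mul_right_cancel this
  have hst : su ^ m = tu ^ m := by
    rw [eq_inv_of_mul_eq_one_right hsuk, eq_inv_of_mul_eq_one_right htuk]
  have : su = tu := by
    have hu : (su * tu⁻¹) ^ m = 1 := by
      rw [mul_pow, hst, inv_pow, mul_inv_cancel]
    have hd : orderOf (su * tu⁻¹) ∣ m := orderOf_dvd_of_pow_eq_one hu
    have hd7 : orderOf (su * tu⁻¹) ∣ 7 := by
      have := orderOf_dvd_natCard (su * tu⁻¹)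
      rwa [cardKu] at this
    have : orderOf (su * tu⁻¹) ∣ 1 := by
      rcases hm13 with h | h <;> subst h
      · exact hd
      · exact Nat.dvd_gcd hd hd7
    rw [Nat.dvd_one, orderOf_eq_one_iff] at this
    have := mul_inv_eq_one.mp this
    exact this
  have : x - y = x - z := by
    have := congrArg Units.val this
    simpa [hsu, htu] using this
  exact sub_right_inj.mp this

section WithJ

variable (J : Subgroup (Equiv.Perm (GaloisField 2 3)))

def JHyp : Prop := ∀ σ : Equiv.Perm (GaloisField 2 3), σ ∈ J ↔
      ∃ (a : (GaloisField 2 3)ˣ) (b : GaloisField 2 3) (i : Fin 3),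
        ∀ x : GaloisField 2 3, σ x = (a : GaloisField 2 3) * x ^ (2 ^ (i : ℕ)) + b

lemma fp_mem (hJ : JHyp J) (a : Kˣ) (b : K) (i : Fin 3) : fp a b i ∈ J :=
  (hJ _).mpr ⟨a, b, i, fun x => fp_apply a b i x⟩

lemma mem_iff (hJ : JHyp J) {σ : Equiv.Perm K} (hσ : σ ∈ J) :
    ∃ (a : Kˣ) (b : K) (i : Fin 3), σ = fp a b i := by
  obtain ⟨a, b, i, h⟩ := (hJ σ).mp hσ
  exact ⟨a, b, i, Equiv.ext fun x => by rw [h x, fp_apply]⟩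

lemma card_J (hJ : JHyp J) : Nat.card ↥J = 168 := by
  have e : (Kˣ × K × Fin 3) ≃ ↥J := by
    refine Equiv.ofBijective (fun t => ⟨fp t.1 t.2.1 t.2.2, fp_mem J hJ _ _ _⟩) ⟨?_, ?_⟩
    · intro t t' h
      exact fp_injective (by simpa [Subtype.ext_iff] using h)
    · rintro ⟨σ, hσ⟩
      obtain ⟨a, b, i, h⟩ := mem_iff J hJ hσ
      exact ⟨⟨a, b, i⟩, by simp [← h]⟩
  rw [← Nat.card_congr e, Nat.card_prod, Nat.card_prod, cardKu, cardK]
  simp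

lemma fact_J (hJ : JHyp J) : (Nat.card ↥J).factorization 3 = 1 := by
  rw [card_J J hJ]
  have h1 : (3 : ℕ) ^ 1 ∣ 168 := by norm_num
  have h2 : ¬ (3 : ℕ) ^ 2 ∣ 168 := by norm_num
  rw [Nat.Prime.pow_dvd_iff_le_factorization (by norm_num) (by norm_num)] at h1 h2
  omega

lemma exists_sylow_fix (hJ : JHyp J) (u v : K) (huv : u ≠ v) :
    ∃ P : Sylow 3 ↥J, ∀ x : K, (∀ g ∈ (P : Subgroup ↥J), g • x = x) ↔ (x = u ∨ x = v) := by
  classical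
  have hw : u + v ≠ 0 := by
    intro hc
    apply huv
    have h1 : u = -v := eq_neg_of_add_eq_zero_left hc
    rw [h1, CharTwo.neg_eq]
  set a : Kˣ := (Units.mk0 (u + v) hw)⁻¹ with ha
  have haK : (a : K) = (u + v)⁻¹ := rfl
  set b : K := u + (u + v)⁻¹ * u ^ 2 with hb
  set σ : Equiv.Perm K := fp a b 1 with hσ
  have hfixu : σ u = u := by
    rw [hσ, fp_apply, haK, hb]
    norm_num
    linear_combination char_add_self ((u + v)⁻¹ * u ^ 2)
  have hfixv : σ v = v := by
    rw [hσ, fp_apply, haK, hb]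
    norm_num
    have key : (u + v)⁻¹ * (v ^ 2 + u ^ 2) = u + v := by
      have h1 : v ^ 2 + u ^ 2 = (u + v) ^ 2 := by rw [sq_add]; ring
      rw [h1, pow_two, ← mul_assoc, inv_mul_cancel₀ hw, one_mul]
    calc (u + v)⁻¹ * v ^ 2 + (u + (u + v)⁻¹ * u ^ 2)
        = ((u + v)⁻¹ * (v ^ 2 + u ^ 2)) + u := by ring
      _ = (u + v) + u := by rw [key]
      _ = v := by linear_combination char_add_self u
  have hfixpow : ∀ n : ℕ, (σ ^ n) u = u := by
    intro n
    induction n with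
    | zero => simp
    | succ n ih => rw [pow_succ, Equiv.Perm.mul_apply, hfixu, ih]
  have hc0 : (a : K) ^ 3 * b ^ 4 + (a : K) * b ^ 2 + b = 0 := by
    have h1 := cube_apply a b σ hσ u
    rw [hfixpow 3] at h1
    exact (left_eq_add.mp h1)
  have hσ3 : σ ^ 3 = 1 := by
    ext x
    rw [cube_apply a b σ hσ x, hc0, add_zero, Equiv.Perm.one_apply]
  have hσne : σ ≠ 1 := by
    rw [hσ, ← fp_one]
    intro hc
    have h2 := fp_injective (a₁ := (a, b, 1)) (a₂ := (1, 0, 0)) hc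
    simpa using congrArg (fun t : Kˣ × K × Fin 3 => t.2.2) h2
  set σJ : ↥J := ⟨σ, fp_mem J hJ a b 1⟩ with hσJ
  have hordJ : orderOf σJ = 3 := by
    rw [← Subgroup.orderOf_coe σJ]
    exact orderOf_eq_prime hσ3 hσne
  refine ⟨Sylow.ofCard (Subgroup.zpowers σJ) ?_, ?_⟩
  · rw [Nat.card_zpowers, hordJ, fact_J J hJ, pow_one]
  · intro x
    constructor
    · intro hfix
      have hσx : (a : K) * x ^ 2 ^ ((1 : Fin 3) : ℕ) + b = x := by
        have h1 := hfix σJ (Subgroup.mem_zpowers σJ)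
        rw [← fp_apply, ← hσ]
        exact h1
      by_contra hcon
      push_neg at hcon
      obtain ⟨hxu, hxv⟩ := hcon
      have hufix : (a : K) * u ^ 2 ^ ((1 : Fin 3) : ℕ) + b = u := by
        rw [← fp_apply, ← hσ]; exact hfixu
      have hvfix : (a : K) * v ^ 2 ^ ((1 : Fin 3) : ℕ) + b = v := by
        rw [← fp_apply, ← hσ]; exact hfixv
      exact huv (fixed_collide a b 1 (by decide) hσx hufix hvfix hxu hxv)
    · rintro (rfl | rfl) <;> intro g hg
      · have hle : Subgroup.zpowers σJ ≤ MulAction.stabilizer ↥J x :=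
          Subgroup.zpowers_le.mpr (MulAction.mem_stabilizer_iff.mpr hfixu)
        exact MulAction.mem_stabilizer_iff.mp (hle hg)
      · have hle : Subgroup.zpowers σJ ≤ MulAction.stabilizer ↥J x :=
          Subgroup.zpowers_le.mpr (MulAction.mem_stabilizer_iff.mpr hfixv)
        exact MulAction.mem_stabilizer_iff.mp (hle hg)

lemma divisor_28 (n : ℕ) (h1 : n ∣ 56) (h2 : n % 3 = 1) (h3 : 8 ≤ n) : n = 28 := by
  have hm : n ∈ Nat.divisors 56 := Nat.mem_divisors.mpr ⟨h1, by norm_num⟩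
  fin_cases hm <;> omega

lemma card_sylow_J (hJ : JHyp J) : Nat.card (Sylow 3 ↥J) = 28 := by
  classical
  obtain ⟨P₀, _⟩ := exists_sylow_fix J hJ 0 1 (by norm_num)
  have hdvd : Nat.card (Sylow 3 ↥J) ∣ (P₀ : Subgroup ↥J).index := Sylow.card_dvd_index P₀
  have hcardP : Nat.card ↥(P₀ : Subgroup ↥J) = 3 := by
    rw [Sylow.card_eq_multiplicity, fact_J J hJ, pow_one]
  have hindex : (P₀ : Subgroup ↥J).index = 56 := by
    have h1 := Subgroup.card_mul_index (P₀ : Subgroup ↥J)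
    rw [hcardP, card_J J hJ] at h1
    omega
  rw [hindex] at hdvd
  have hmod : Nat.card (Sylow 3 ↥J) % 3 = 1 := by
    have h1 := card_sylow_modEq_one 3 ↥J
    unfold Nat.ModEq at h1
    omega
  obtain ⟨w, hw0, hw1⟩ : ∃ w : K, w ≠ 0 ∧ w ≠ 1 := by
    by_contra hcon
    push_neg at hcon
    have hsub : (Finset.univ : Finset K) ⊆ {0, 1} := by
      intro x _
      by_cases h : x = 0
      · simp [h]
      · simp [hcon x h]
    have hcard := Finset.card_le_card hsub
    rw [Finset.card_univ, fcardK] at hcard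
    have : ({0, 1} : Finset K).card ≤ 2 :=
      le_trans (Finset.card_insert_le _ _) (by simp)
    omega
  set F : Kˣ ⊕ Unit → Sylow 3 ↥J := fun s => match s with
    | Sum.inl c => (exists_sylow_fix J hJ 0 (c : K) (Ne.symm c.ne_zero)).choose
    | Sum.inr _ => (exists_sylow_fix J hJ 1 w (Ne.symm hw1)).choose
    with hF
  have hinj : Function.Injective F := by
    rintro (c | ⟨⟩) (d | ⟨⟩) hst
    · have hc := (exists_sylow_fix J hJ 0 (c : K) (Ne.symm c.ne_zero)).choose_spec
      have hd := (exists_sylow_fix J hJ 0 (d : K) (Ne.symm d.ne_zero)).choose_spec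
      simp only [hF] at hst
      rw [← hst] at hd
      have hfix := (hd (d : K)).mpr (Or.inr rfl)
      rcases (hc (d : K)).mp hfix with h | h
      · exact absurd h d.ne_zero
      · rw [Units.ext (h : (d : K) = (c : K))]
    · exfalso
      have hc := (exists_sylow_fix J hJ 0 (c : K) (Ne.symm c.ne_zero)).choose_spec
      have hd := (exists_sylow_fix J hJ 1 w (Ne.symm hw1)).choose_spec
      simp only [hF] at hst
      rw [← hst] at hd
      have hfix := (hc 0).mpr (Or.inl rfl)
      rcases (hd 0).mp hfix with h | h
      · exact zero_ne_one h
      · exact hw0 h.symm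
    · exfalso
      have hc := (exists_sylow_fix J hJ 0 (d : K) (Ne.symm d.ne_zero)).choose_spec
      have hd := (exists_sylow_fix J hJ 1 w (Ne.symm hw1)).choose_spec
      simp only [hF] at hst
      rw [hst] at hd
      have hfix := (hc 0).mpr (Or.inl rfl)
      rcases (hd 0).mp hfix with h | h
      · exact zero_ne_one h
      · exact hw0 h.symm
    · rfl
  have hge : 8 ≤ Nat.card (Sylow 3 ↥J) := by
    have h1 := Nat.card_le_card_of_injective F hinj
    rwa [Nat.card_sum, cardKu, Nat.card_unique] at h1
  exact divisor_28 _ hdvd hmod hge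

lemma sylow_orbits (hJ : JHyp J) (P : Sylow 3 ↥J) :
    Nat.card (MulAction.orbitRel.Quotient (P : Subgroup ↥J) K) = 4 ∧
    Nat.card {x : K // ∀ g ∈ (P : Subgroup ↥J), g • x = x} = 2 ∧
    ∀ x : K, Nat.card (MulAction.orbit (P : Subgroup ↥J) x) = 1 ∨
      Nat.card (MulAction.orbit (P : Subgroup ↥J) x) = 3 := by
  classical
  have hcardP : Nat.card ↥(P : Subgroup ↥J) = 3 := by
    rw [Sylow.card_eq_multiplicity, fact_J J hJ, pow_one]
  -- find a generator of order 3
  have hnt : Nontrivial ↥(P : Subgroup ↥J) := by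
    apply Finite.one_lt_card_iff_nontrivial.mp
    rw [hcardP]; norm_num
  obtain ⟨g, hg1⟩ := exists_ne (1 : ↥(P : Subgroup ↥J))
  have hordg : orderOf g = 3 := by
    have hdvd : orderOf g ∣ 3 := by
      have h1 := orderOf_dvd_natCard g
      rwa [hcardP] at h1
    rcases Nat.Prime.eq_one_or_self_of_dvd (by norm_num) _ hdvd with h | h
    · exact absurd (orderOf_eq_one_iff.mp h) hg1
    · exact h
  have hσJP : (g : ↥J) ∈ (P : Subgroup ↥J) := g.2
  set σ : Equiv.Perm K := ((g : ↥J) : Equiv.Perm K) with hσdef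
  have hordσ : orderOf σ = 3 := by
    rw [hσdef, Subgroup.orderOf_coe, Subgroup.orderOf_coe, hordg]
  have hσ3 : σ ^ 3 = 1 := by
    have h1 := pow_orderOf_eq_one σ
    rwa [hordσ] at h1
  have hσne : σ ≠ 1 := by
    intro hcon
    rw [hcon, orderOf_one] at hordσ
    omega
  obtain ⟨a, b, i, hrep⟩ := mem_iff J hJ (g : ↥J).2
  have hi : i ≠ 0 := by
    intro hcon
    subst hcon
    apply hσne
    rw [hσdef] at hσ3 ⊢
    rw [hrep] at hσ3 ⊢
    exact i0_trivial a b hσ3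
  -- fixed points of P are fixed points of σ
  have hfix_imp : ∀ x : K, (∀ g' ∈ (P : Subgroup ↥J), g' • x = x) →
      (a : K) * x ^ 2 ^ (i : ℕ) + b = x := by
    intro x hx
    have h1 := hx (g : ↥J) hσJP
    rw [← fp_apply, ← hrep]
    exact h1
  set pred : K → Prop := fun x => ∀ g' ∈ (P : Subgroup ↥J), g' • x = x with hpred
  set Fs : Finset K := Finset.univ.filter pred with hFs
  have hFsle : Fs.card ≤ 2 := by
    by_contra hcon
    push_neg at hcon
    obtain ⟨x, y, z, hxm, hym, hzm, hxy, hxz, hyz⟩ := Finset.two_lt_card_iff.mp hcon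
    rw [hFs, Finset.mem_filter] at hxm hym hzm
    exact hyz (fixed_collide a b i hi (hfix_imp x hxm.2) (hfix_imp y hym.2)
      (hfix_imp z hzm.2) hxy hxz)
  have hsub_card : Nat.card {x : K // pred x} = Fs.card := by
    rw [Nat.card_eq_fintype_card, hFs, Fintype.card_subtype]
  have hmodeq : Nat.card {x : K // pred x} % 3 = 2 := by
    have hmod := IsPGroup.card_modEq_card_fixedPoints (p := 3) P.isPGroup' K
    have hEq : Nat.card ↑(MulAction.fixedPoints ↥(P : Subgroup ↥J) K)
        = Nat.card {x : K // pred x} := by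
      apply Nat.card_congr
      apply Equiv.subtypeEquivRight
      intro x
      rw [MulAction.mem_fixedPoints]
      constructor
      · intro hx g' hg'; exact hx ⟨g', hg'⟩
      · intro hx g'; exact hx ↑g' g'.2
    rw [hEq, cardK] at hmod
    unfold Nat.ModEq at hmod
    omega
  have hfix2 : Nat.card {x : K // pred x} = 2 := by
    rw [hsub_card] at hmodeq ⊢
    omega
  have horb : ∀ x : K, Nat.card (MulAction.orbit ↥(P : Subgroup ↥J) x) = 1 ∨
      Nat.card (MulAction.orbit ↥(P : Subgroup ↥J) x) = 3 := by
    intro x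
    have hdvd : Nat.card (MulAction.orbit ↥(P : Subgroup ↥J) x) ∣ 3 := by
      have h1 : Nat.card (MulAction.orbit ↥(P : Subgroup ↥J) x)
          = (MulAction.stabilizer ↥(P : Subgroup ↥J) x).index := by
        rw [Nat.card_congr (MulAction.orbitEquivQuotientStabilizer ↥(P : Subgroup ↥J) x),
          Subgroup.index_eq_card]
      have h2 := Subgroup.index_dvd_card (MulAction.stabilizer ↥(P : Subgroup ↥J) x)
      rw [hcardP] at h2
      rw [h1]
      exact h2
    exact Nat.Prime.eq_one_or_self_of_dvd (by norm_num) _ hdvd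
  refine ⟨?_, hfix2, horb⟩
  -- count the orbits
  haveI : Fintype (MulAction.orbitRel.Quotient ↥(P : Subgroup ↥J) K) := Fintype.ofFinite _
  have hsum : ∑ ω : MulAction.orbitRel.Quotient ↥(P : Subgroup ↥J) K,
      Nat.card (MulAction.orbit ↥(P : Subgroup ↥J) (Quotient.out ω)) = 8 := by
    letI : ∀ ω : MulAction.orbitRel.Quotient ↥(P : Subgroup ↥J) K,
        Fintype ↥(MulAction.orbit ↥(P : Subgroup ↥J) (Quotient.out ω)) :=
      fun _ => Fintype.ofFinite _
    have h1 := Fintype.card_congr (MulAction.selfEquivSigmaOrbits ↥(P : Subgroup ↥J) K)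
    rw [Fintype.card_sigma, fcardK] at h1
    simp only [Nat.card_eq_fintype_card]
    exact h1.symm
  set T : Finset (MulAction.orbitRel.Quotient ↥(P : Subgroup ↥J) K) :=
    Finset.univ.filter (fun ω => Nat.card (MulAction.orbit ↥(P : Subgroup ↥J)
      (Quotient.out ω)) = 1) with hT
  have hTcard : T.card = Fs.card := by
    apply Finset.card_bij (fun ω _ => Quotient.out ω)
    · intro ω hω
      rw [hT, Finset.mem_filter] at hω
      rw [hFs, Finset.mem_filter]
      refine ⟨Finset.mem_univ _, ?_⟩
      intro g' hg'
      have hss : Subsingleton ↥(MulAction.orbit ↥(P : Subgroup ↥J) (Quotient.out ω)) :=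
        (Nat.card_eq_one_iff_unique.mp hω.2).1
      have e1 : (⟨(⟨g', hg'⟩ : ↥(P : Subgroup ↥J)) • Quotient.out ω,
          MulAction.mem_orbit _ _⟩ : ↥(MulAction.orbit ↥(P : Subgroup ↥J) (Quotient.out ω)))
          = ⟨Quotient.out ω, MulAction.mem_orbit_self _⟩ := Subsingleton.elim _ _
      exact congrArg Subtype.val e1
    · intro ω₁ _ ω₂ _ h
      exact Quotient.out_injective h
    · intro x hx
      rw [hFs, Finset.mem_filter] at hx
      have horbx : MulAction.orbit ↥(P : Subgroup ↥J) x = {x} := by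
        apply Set.eq_singleton_iff_unique_mem.mpr
        constructor
        · exact MulAction.mem_orbit_self x
        · rintro y ⟨g', rfl⟩
          exact hx.2 ↑g' g'.2
      have hout : Quotient.out (⟦x⟧ : MulAction.orbitRel.Quotient ↥(P : Subgroup ↥J) K) = x := by
        have h1 : Quotient.out (⟦x⟧ : MulAction.orbitRel.Quotient ↥(P : Subgroup ↥J) K) ∈
            MulAction.orbit ↥(P : Subgroup ↥J) x :=
          MulAction.orbitRel_apply.mp (Quotient.mk_out x)
        rw [horbx] at h1
        exact h1
      refine ⟨⟦x⟧, ?_, hout⟩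
      rw [hT, Finset.mem_filter]
      refine ⟨Finset.mem_univ _, ?_⟩
      rw [hout, horbx]
      haveI := Set.uniqueSingleton x
      exact Nat.card_unique
  have hsdiff := Finset.sum_sdiff (Finset.subset_univ T)
    (f := fun ω => Nat.card (MulAction.orbit ↥(P : Subgroup ↥J) (Quotient.out ω)))
  rw [hsum] at hsdiff
  have hsumT : ∑ ω ∈ T, Nat.card (MulAction.orbit ↥(P : Subgroup ↥J) (Quotient.out ω))
      = T.card := by
    have h1 : ∑ ω ∈ T, Nat.card (MulAction.orbit ↥(P : Subgroup ↥J) (Quotient.out ω))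
        = ∑ _ω ∈ T, 1 :=
      Finset.sum_congr rfl (fun ω hω => by
        rw [hT, Finset.mem_filter] at hω
        exact hω.2)
    rw [h1, Finset.sum_const, smul_eq_mul, mul_one]
  have hsumNT : ∑ ω ∈ Finset.univ \ T,
      Nat.card (MulAction.orbit ↥(P : Subgroup ↥J) (Quotient.out ω))
      = (Finset.univ \ T).card * 3 := by
    have h1 : ∑ ω ∈ Finset.univ \ T,
        Nat.card (MulAction.orbit ↥(P : Subgroup ↥J) (Quotient.out ω))
        = ∑ _ω ∈ Finset.univ \ T, 3 :=
      Finset.sum_congr rfl (fun ω hω => by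
        rw [Finset.mem_sdiff, hT, Finset.mem_filter] at hω
        rcases horb (Quotient.out ω) with h | h
        · exact absurd ⟨Finset.mem_univ _, h⟩ hω.2
        · exact h)
    rw [h1, Finset.sum_const, smul_eq_mul]
  have hT2 : T.card = 2 := by rw [hTcard, ← hsub_card, hfix2]
  have hcard_sdiff : (Finset.univ \ T).card = Finset.univ.card - T.card :=
    Finset.card_sdiff_of_subset (Finset.subset_univ T)
  have hle : T.card ≤ Finset.univ.card := Finset.card_le_univ T
  rw [hsumT, hsumNT] at hsdiff
  rw [Nat.card_eq_fintype_card, ← Finset.card_univ]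
  omega

end WithJ

end GF8SylowAux


/-- The affine semilinear group of `GF(8)`: `|J| = 168`, `J` has exactly 28 Sylow
3-subgroups, and each Sylow 3-subgroup has exactly 4 orbits on `GF(8)`, of sizes
1, 1, 3, 3. -/
theorem affine_semilinear_group_GF8_sylow_three
    (J : Subgroup (Equiv.Perm (GaloisField 2 3)))
    -- J consists of all maps x ↦ a·x^(2^i) + b with a ≠ 0, i ∈ {0, 1, 2}
    (hJ : ∀ σ : Equiv.Perm (GaloisField 2 3), σ ∈ J ↔
      ∃ (a : (GaloisField 2 3)ˣ) (b : GaloisField 2 3) (i : Fin 3),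
        ∀ x : GaloisField 2 3, σ x = (a : GaloisField 2 3) * x ^ (2 ^ (i : ℕ)) + b) :
    Nat.card J = 168 ∧
      Nat.card (Sylow 3 J) = 28 ∧
      ∀ P : Sylow 3 J,
        Nat.card (MulAction.orbitRel.Quotient (P : Subgroup J) (GaloisField 2 3)) = 4 ∧
        Nat.card {x : GaloisField 2 3 // ∀ g ∈ (P : Subgroup J), g • x = x} = 2 ∧
        ∀ x : GaloisField 2 3,
          Nat.card (MulAction.orbit (P : Subgroup J) x) = 1 ∨
          Nat.card (MulAction.orbit (P : Subgroup J) x) = 3 := by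
  exact ⟨GF8SylowAux.card_J J hJ, GF8SylowAux.card_sylow_J J hJ,
    fun P => GF8SylowAux.sylow_orbits J hJ P⟩
end

section
/- Let K = GF(8) be the field with 8 elements and let J be the group of all permutations of K of the form x ↦ a·x^{2^i} + b with a ∈ K^×, b ∈ K, and i ∈ {0, 1, 2}. Let J × J act on K ⊕ K coordinatewise. Then every subgroup G of J × J whose order is divisible by 9 is 3-moderate as a permutation group on K ⊕ K; that is, there exists a subset Δ of K ⊕ K whose setwise stabilizer Stab_G(Δ) satisfies 1 < |Stab_G(Δ)|₃ < |G|₃. -/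
open Pointwise

/- ### Auxiliary field-theoretic lemmas about `GF(8)` -/

noncomputable local instance : Fintype (GaloisField 2 3) := Fintype.ofFinite _

lemma K8_card : Fintype.card (GaloisField 2 3) = 8 := by
  have := GaloisField.card 2 3 (by norm_num)
  rwa [Nat.card_eq_fintype_card] at this

lemma K8_pow8 (x : GaloisField 2 3) : x ^ 8 = x := by
  have := FiniteField.pow_card x; rwa [K8_card] at this

lemma K8_pow7 {x : GaloisField 2 3} (hx : x ≠ 0) : x ^ 7 = 1 := by
  have := FiniteField.pow_card_sub_one_eq_one x hx; rwa [K8_card] at this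

lemma K8_two : (1 : GaloisField 2 3) + 1 = 0 := by
  have := CharP.cast_eq_zero (GaloisField 2 3) 2
  exact_mod_cast this

/-- `g` is represented by semilinear-affine parameters `(a, b, i)`. -/
def JRep (a b : GaloisField 2 3) (i : ℕ) (g : GaloisField 2 3 → GaloisField 2 3) : Prop :=
  a ≠ 0 ∧ ∀ x, g x = a * x ^ (2 ^ i) + b

lemma JRep.reduce {a b : GaloisField 2 3} {i : ℕ} {g} (h : JRep a b (i + 3) g) : JRep a b i g := by
  refine ⟨h.1, fun x => ?_⟩
  rw [h.2 x]
  have : x ^ (2:ℕ) ^ (i + 3) = x ^ (2:ℕ) ^ i := by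
    rw [pow_add, mul_comm, pow_mul]
    norm_num
    rw [K8_pow8]
  rw [this]

lemma JRep.comp {a b c d : GaloisField 2 3} {i j : ℕ} {g h}
    (hg : JRep a b i g) (hh : JRep c d j h) :
    JRep (a * c ^ (2 ^ i)) (a * d ^ (2 ^ i) + b) (i + j) (g ∘ h) := by
  refine ⟨mul_ne_zero hg.1 (pow_ne_zero _ hh.1), fun x => ?_⟩
  show g (h x) = _
  rw [hg.2, hh.2, add_pow_char_pow, mul_pow, ← pow_mul, ← pow_add]
  ring

lemma JRep.reduce_mul {a b : GaloisField 2 3} {g} : ∀ i, JRep a b (3 * i) g → JRep a b 0 g := by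
  intro i
  induction i with
  | zero => intro h; simpa using h
  | succ n ih =>
      intro h
      apply ih
      rw [show 3 * (n+1) = 3*n + 3 by ring] at h
      exact h.reduce

lemma K8_cube {A : GaloisField 2 3} (hA : A ≠ 0) (h3 : A ^ 3 = 1) : A = 1 := by
  have h7 := K8_pow7 hA
  have key : A * (A^3)^2 = A ^ 7 := by ring
  rw [h3, h7] at key
  simpa using key

/-- An affine map on `GF(8)` whose compositional cube is the identity is the identity. -/
lemma affine_cube_id {A B : GaloisField 2 3} {h : GaloisField 2 3 → GaloisField 2 3}
    (hr : JRep A B 0 h) (h3 : ∀ y, h (h (h y)) = y) : ∀ y, h y = y := by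
  obtain ⟨hA, hrep⟩ := hr
  simp only [pow_zero, pow_one] at hrep
  have e0 := h3 0
  rw [hrep, hrep, hrep] at e0
  have e1 := h3 1
  rw [hrep, hrep, hrep] at e1
  have hA3 : A ^ 3 = 1 := by linear_combination e1 - e0
  have hA1 : A = 1 := K8_cube hA hA3
  subst hA1
  have hB : B = 0 := by linear_combination e0 - B * K8_two
  intro y; rw [hrep, hB]; ring

/-- An element of the affine semilinear group of `GF(8)` fixing three distinct points
is the identity. -/
lemma threefix {a b : GaloisField 2 3} {i : ℕ} {g : GaloisField 2 3 → GaloisField 2 3}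
    (hr : JRep a b i g) (hi : i < 3) {u v w : GaloisField 2 3}
    (huv : u ≠ v) (huw : u ≠ w) (hvw : v ≠ w)
    (hu : g u = u) (hv : g v = v) (hw : g w = w) : ∀ x, g x = x := by
  obtain ⟨ha, hrep⟩ := hr
  rw [hrep] at hu hv hw
  set t := u - v with ht
  set s := u - w with hs
  have htne : t ≠ 0 := sub_ne_zero.mpr huv
  have hsne : s ≠ 0 := sub_ne_zero.mpr huw
  have hts : t ≠ s := fun h => hvw (sub_right_inj.mp h)
  interval_cases i
  · -- i = 0 : affine
    simp only [pow_zero, pow_one] at hu hv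
    have ha1 : (a - 1) * t = 0 := by rw [ht]; linear_combination hu - hv
    have ha1' : a = 1 := by
      rcases mul_eq_zero.mp ha1 with h | h
      · linear_combination h
      · exact absurd h htne
    subst ha1'
    have hb : b = 0 := by linear_combination hu
    intro x; rw [hrep, hb]; ring
  · -- i = 1
    exfalso
    have h1 : a * t ^ 2 = t := by
      rw [ht]
      linear_combination hu - hv + (a*v^2 - a*u*v + u*v - v^2) * K8_two + (v^2 - u*v) * K8_two
    have h2 : a * s ^ 2 = s := by
      rw [hs]
      linear_combination hu - hw + (a*w^2 - a*u*w + u*w - w^2) * K8_two + (w^2 - u*w) * K8_two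
    have e1 : a * t = 1 := by
      have : t * (a * t - 1) = 0 := by linear_combination h1
      rcases mul_eq_zero.mp this with h | h
      · exact absurd h htne
      · linear_combination h
    have e2 : a * s = 1 := by
      have : s * (a * s - 1) = 0 := by linear_combination h2
      rcases mul_eq_zero.mp this with h | h
      · exact absurd h hsne
      · linear_combination h
    apply hts
    have : a * (t - s) = 0 := by linear_combination e1 - e2
    rcases mul_eq_zero.mp this with h | h
    · exact absurd h ha
    · linear_combination h
  · -- i = 2
    exfalso
    have h1 : a * t ^ 4 = t := by
      rw [ht]
      linear_combination hu - hv + (-2*a*u*v^3 + 3*a*u^2*v^2 - 2*a*u^3*v + a*v^4 + 2*u*v^3 -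
        3*u^2*v^2 + 2*u^3*v - 2*v^4) * K8_two +
        (-2*u*v^3 + 3*u^2*v^2 - 2*u^3*v + 2*v^4) * K8_two
    have h2 : a * s ^ 4 = s := by
      rw [hs]
      linear_combination hu - hw + (-2*a*u*w^3 + 3*a*u^2*w^2 - 2*a*u^3*w + a*w^4 + 2*u*w^3 -
        3*u^2*w^2 + 2*u^3*w - 2*w^4) * K8_two +
        (-2*u*w^3 + 3*u^2*w^2 - 2*u^3*w + 2*w^4) * K8_two
    have e1 : a * t ^ 3 = 1 := by
      have : t * (a * t ^ 3 - 1) = 0 := by linear_combination h1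
      rcases mul_eq_zero.mp this with h | h
      · exact absurd h htne
      · linear_combination h
    have e2 : a * s ^ 3 = 1 := by
      have : s * (a * s ^ 3 - 1) = 0 := by linear_combination h2
      rcases mul_eq_zero.mp this with h | h
      · exact absurd h hsne
      · linear_combination h
    have hcube : t ^ 3 = s ^ 3 := by
      have : a * (t^3 - s^3) = 0 := by linear_combination e1 - e2
      rcases mul_eq_zero.mp this with h | h
      · exact absurd h ha
      · linear_combination h
    have h7t := K8_pow7 htne
    have h7s := K8_pow7 hsne
    apply hts
    have key : (t - s) * s ^ 6 = 0 := by
      linear_combination h7t - h7s + (- t) * hcube * (t^3 + s^3)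
    rcases mul_eq_zero.mp key with h | h
    · linear_combination h
    · exact absurd (pow_eq_zero_iff (by norm_num) |>.mp h) hsne

/-- From a representation of `g`, the compositional cube of `g` is affine. -/
lemma cube_affine {a b : GaloisField 2 3} {i : ℕ} {g : GaloisField 2 3 → GaloisField 2 3}
    (h : JRep a b i g) : ∃ A B, JRep A B 0 (fun x => g (g (g x))) := by
  have r3 := h.comp (h.comp h)
  rw [show i + (i + i) = 3 * i by ring] at r3
  exact ⟨_, _, JRep.reduce_mul i r3⟩

/-- A `J`-element whose ninth compositional power is the identity has its cube equal
to the identity. -/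
lemma nine_iter_id {a b : GaloisField 2 3} {i : ℕ} {g : GaloisField 2 3 → GaloisField 2 3}
    (hr : JRep a b i g)
    (h9 : ∀ x, g (g (g (g (g (g (g (g (g x)))))))) = x) : ∀ x, g (g (g x)) = x := by
  obtain ⟨A, B, r0⟩ := cube_affine hr
  have := affine_cube_id r0 (fun y => h9 y)
  exact this

/- ### Permutation helper lemmas -/

lemma perm_coord_pow {α β : Type*} {σ : Equiv.Perm (α × β)} {g : Equiv.Perm α} {h : Equiv.Perm β}
    (H : ∀ z, σ z = (g z.1, h z.2)) (n : ℕ) : ∀ z, (σ^n) z = ((g^n) z.1, (h^n) z.2) := by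
  induction n with
  | zero => intro z; simp
  | succ n ih =>
      intro z
      rw [pow_succ, pow_succ, pow_succ, Equiv.Perm.mul_apply, Equiv.Perm.mul_apply,
        Equiv.Perm.mul_apply, ih (σ z), H z]

lemma perm_pow9_apply {α : Type*} (g : Equiv.Perm α) (x : α) :
    (g^9) x = g (g (g (g (g (g (g (g (g x)))))))) := by
  rw [show (g:Equiv.Perm α)^9 = g*g*g*g*g*g*g*g*g by simp [pow_succ]]
  simp [Equiv.Perm.mul_apply]

lemma perm_pow3_apply {α : Type*} (g : Equiv.Perm α) (x : α) :
    (g^3) x = g (g (g x)) := by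
  rw [show (g:Equiv.Perm α)^3 = g*g*g by simp [pow_succ]]
  simp [Equiv.Perm.mul_apply]

/-- Every subgroup of `J × J` (acting coordinatewise on `GF(8) ⊕ GF(8)`, where `J` is
the affine semilinear group of `GF(8)`) whose order is divisible by 9 is 3-moderate. -/
theorem subgroup_of_JxJ_three_moderate
    (J : Subgroup (Equiv.Perm (GaloisField 2 3)))
    -- J consists of all maps x ↦ a·x^(2^i) + b with a ≠ 0, i ∈ {0, 1, 2}
    (hJ : ∀ σ : Equiv.Perm (GaloisField 2 3), σ ∈ J ↔
      ∃ (a : (GaloisField 2 3)ˣ) (b : GaloisField 2 3) (i : Fin 3),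
        ∀ x : GaloisField 2 3, σ x = (a : GaloisField 2 3) * x ^ (2 ^ (i : ℕ)) + b)
    (G : Subgroup (Equiv.Perm (GaloisField 2 3 × GaloisField 2 3)))
    -- G is a subgroup of J × J acting coordinatewise on K ⊕ K
    (hG : ∀ σ ∈ G, ∃ g ∈ J, ∃ h ∈ J,
      ∀ z : GaloisField 2 3 × GaloisField 2 3, σ z = (g z.1, h z.2))
    (h9 : 9 ∣ Nat.card G) :
    IsPModerate 3 G (GaloisField 2 3 × GaloisField 2 3) := by
  classical
  -- rep extraction from J-membership
  have getRep : ∀ g : Equiv.Perm (GaloisField 2 3), g ∈ J →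
      ∃ (a b : GaloisField 2 3) (i : ℕ), i < 3 ∧ JRep a b i ⇑g := by
    intro g hg
    obtain ⟨a, b, i, hab⟩ := (hJ g).mp hg
    exact ⟨a, b, i, i.2, a.ne_zero, hab⟩
  -- Step 1: find a "good" element of G
  have key : ∃ σ : Equiv.Perm (GaloisField 2 3 × GaloisField 2 3), σ ∈ G ∧ σ ^ 3 = 1 ∧
      ∃ z : GaloisField 2 3 × GaloisField 2 3, (σ z).1 ≠ z.1 ∧ (σ z).2 ≠ z.2 := by
    by_contra hbad
    push_neg at hbad
    -- hbad : ∀ σ, σ ∈ G → σ^3 = 1 → ∀ z, (σ z).1 ≠ z.1 → (σ z).2 = z.2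
    obtain ⟨P, hPcard⟩ := Sylow.exists_subgroup_card_pow_prime (G := G) 3 (n := 2)
      (by rw [show (3:ℕ)^2 = 9 by norm_num]; exact h9)
    set P' : Subgroup (Equiv.Perm (GaloisField 2 3 × GaloisField 2 3)) := P.map G.subtype
      with hP'def
    have hP'le : P' ≤ G := Subgroup.map_subtype_le P
    have hP'card : Nat.card P' = 9 := by
      rw [hP'def]
      rw [← Nat.card_congr (Subgroup.equivMapOfInjective P G.subtype
        (Subgroup.subtype_injective G)).toEquiv]
      rw [hPcard]; norm_num
    have hpow9 : ∀ τ ∈ P', τ ^ 9 = 1 := by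
      intro τ hτ
      obtain ⟨t, htP, rfl⟩ := Subgroup.mem_map.mp hτ
      letI : Fintype P := Fintype.ofFinite _
      have hc : Fintype.card P = 9 := by
        rw [← Nat.card_eq_fintype_card, hPcard]; norm_num
      have h1 : (⟨t, htP⟩ : P) ^ 9 = 1 := by rw [← hc]; exact pow_card_eq_one
      have h2 : (t : G) ^ 9 = 1 := by
        have := congrArg Subtype.val h1
        simpa using this
      have h3 := congrArg Subtype.val h2
      simpa using h3
    have hP3 : ∀ τ ∈ P', τ ^ 3 = 1 := by
      intro τ hτ
      obtain ⟨gτ, hgτJ, hτ', hhτJ, Hτ⟩ := hG τ (hP'le hτ)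
      have h9τ := hpow9 τ hτ
      have hg9 : ∀ x', gτ (gτ (gτ (gτ (gτ (gτ (gτ (gτ (gτ x')))))))) = x' := by
        intro x'
        have h0 : (τ^9) (x', (0:GaloisField 2 3)) = (1 : Equiv.Perm (GaloisField 2 3 × GaloisField 2 3)) (x', (0:GaloisField 2 3)) := by
          rw [h9τ]
        rw [perm_coord_pow Hτ 9] at h0
        simpa [perm_pow9_apply] using congrArg Prod.fst h0
      have hh9 : ∀ y', hτ' (hτ' (hτ' (hτ' (hτ' (hτ' (hτ' (hτ' (hτ' y')))))))) = y' := by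
        intro y'
        have h0 : (τ^9) ((0:GaloisField 2 3), y') = (1 : Equiv.Perm (GaloisField 2 3 × GaloisField 2 3)) ((0:GaloisField 2 3), y') := by
          rw [h9τ]
        rw [perm_coord_pow Hτ 9] at h0
        simpa [perm_pow9_apply] using congrArg Prod.snd h0
      obtain ⟨a, b, i, hi, rg⟩ := getRep gτ hgτJ
      obtain ⟨c, d, j, hj, rh⟩ := getRep hτ' hhτJ
      have hg3 := nine_iter_id rg hg9
      have hh3 := nine_iter_id rh hh9
      apply Equiv.ext
      intro w
      rw [perm_coord_pow Hτ 3 w, perm_pow3_apply, perm_pow3_apply, hg3, hh3]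
      rfl
    -- helper : an element of P' which is trivial on the first coordinate and affine on
    -- the second is the identity
    have mkid : ∀ (ρ : Equiv.Perm (GaloisField 2 3 × GaloisField 2 3))
        (f : GaloisField 2 3 → GaloisField 2 3) (A B : GaloisField 2 3),
        ρ ∈ P' → (∀ w : GaloisField 2 3 × GaloisField 2 3, ρ w = (w.1, f w.2)) →
        JRep A B 0 f → ρ = 1 := by
      intro ρ f A B hρP Hρ hrep
      have hρ3 := hP3 ρ hρP
      have hρ3p : ∀ w, ρ (ρ (ρ w)) = w := by
        intro w
        have h0 : (ρ^3) w = (1 : Equiv.Perm (GaloisField 2 3 × GaloisField 2 3)) w := by rw [hρ3]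
        simpa [perm_pow3_apply] using h0
      have hf3 : ∀ y', f (f (f y')) = y' := by
        intro y'
        have := hρ3p ((0:GaloisField 2 3), y')
        rw [Hρ, Hρ, Hρ] at this
        simpa using congrArg Prod.snd this
      have hfid := affine_cube_id hrep hf3
      apply Equiv.ext
      intro w
      rw [Hρ, hfid]
      rfl
    have mkid' : ∀ (ρ : Equiv.Perm (GaloisField 2 3 × GaloisField 2 3))
        (f : GaloisField 2 3 → GaloisField 2 3) (A B : GaloisField 2 3),
        ρ ∈ P' → (∀ w : GaloisField 2 3 × GaloisField 2 3, ρ w = (f w.1, w.2)) →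
        JRep A B 0 f → ρ = 1 := by
      intro ρ f A B hρP Hρ hrep
      have hρ3 := hP3 ρ hρP
      have hρ3p : ∀ w, ρ (ρ (ρ w)) = w := by
        intro w
        have h0 : (ρ^3) w = (1 : Equiv.Perm (GaloisField 2 3 × GaloisField 2 3)) w := by rw [hρ3]
        simpa [perm_pow3_apply] using h0
      have hf3 : ∀ x', f (f (f x')) = x' := by
        intro x'
        have := hρ3p (x', (0:GaloisField 2 3))
        rw [Hρ, Hρ, Hρ] at this
        simpa using congrArg Prod.fst this
      have hfid := affine_cube_id hrep hf3
      apply Equiv.ext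
      intro w
      rw [Hρ, hfid]
      rfl
    -- get a nontrivial element of P'
    have hne1 : ∃ τ1 ∈ P', τ1 ≠ 1 := by
      rcases Subgroup.bot_or_exists_ne_one P' with hbot | hex
      · rw [hbot, Subgroup.card_bot] at hP'card; omega
      · exact hex
    obtain ⟨τ1, hτ1P, hτ1ne⟩ := hne1
    have hτ13 : τ1 ^ 3 = 1 := hP3 τ1 hτ1P
    -- get an element outside {1, τ1, τ1*τ1}
    have hne2 : ∃ τ2 ∈ P', τ2 ∉ ({1, τ1, τ1*τ1} :
        Set (Equiv.Perm (GaloisField 2 3 × GaloisField 2 3))) := by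
      by_contra hcon
      push_neg at hcon
      have hsub : (P' : Set (Equiv.Perm (GaloisField 2 3 × GaloisField 2 3))) ⊆
          {1, τ1, τ1*τ1} := fun t ht => hcon t ht
      have h1 : Nat.card P' = (P' : Set (Equiv.Perm (GaloisField 2 3 × GaloisField 2 3))).ncard := by
        rw [← Nat.card_coe_set_eq]
        rfl
      have h2 := Set.ncard_le_ncard hsub (Set.toFinite _)
      have h3 : ({1, τ1, τ1*τ1} :
          Set (Equiv.Perm (GaloisField 2 3 × GaloisField 2 3))).ncard ≤ 3 := by
        refine le_trans (Set.ncard_insert_le _ _) ?_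
        have h4 := Set.ncard_insert_le τ1 ({τ1*τ1} :
          Set (Equiv.Perm (GaloisField 2 3 × GaloisField 2 3)))
        have h5 := Set.ncard_singleton (τ1*τ1)
        omega
      rw [← h1] at h2
      omega
    obtain ⟨τ2, hτ2P, hτ2notin⟩ := hne2
    have hτ23 : τ2 ^ 3 = 1 := hP3 τ2 hτ2P
    have hτ2ne : τ2 ≠ 1 := fun e => hτ2notin (by rw [e]; left; rfl)
    -- final contradiction helpers
    have h3a : τ1 * τ1 * τ1 = 1 := by
      have := hτ13; rwa [pow_succ, pow_succ, pow_one] at this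
    have h3b : τ2 * τ2 * τ2 = 1 := by
      have := hτ23; rwa [pow_succ, pow_succ, pow_one] at this
    have hτ1inv : τ1⁻¹ = τ1 * τ1 :=
      inv_eq_of_mul_eq_one_right (by rw [← mul_assoc]; exact h3a)
    have hτ2inv : τ2⁻¹ = τ2 * τ2 :=
      inv_eq_of_mul_eq_one_right (by rw [← mul_assoc]; exact h3b)
    have contra1 : τ1 * τ2 = 1 → False := by
      intro e
      apply hτ2notin
      have hinv : τ2 = τ1⁻¹ := eq_inv_of_mul_eq_one_right e
      rw [hinv, hτ1inv]
      right; right; rfl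
    have contra2 : τ1 * (τ2 * τ2) = 1 → False := by
      intro e
      apply hτ2notin
      have e2 : τ2 * τ2 = τ1⁻¹ := eq_inv_of_mul_eq_one_right e
      have hτ1eq : τ1 = τ2 := by
        calc τ1 = (τ2*τ2)⁻¹ := by rw [e2, inv_inv]
        _ = τ2⁻¹ * τ2⁻¹ := by rw [mul_inv_rev]
        _ = (τ2*τ2) * (τ2*τ2) := by rw [hτ2inv]
        _ = (τ2*τ2*τ2) * τ2 := by simp only [mul_assoc]
        _ = τ2 := by rw [h3b, one_mul]
      rw [← hτ1eq]
      right; left; rfl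
    by_cases hA : ∃ τ ∈ P', ∃ w : GaloisField 2 3 × GaloisField 2 3, (τ w).1 ≠ w.1
    · by_cases hB : ∃ τ ∈ P', ∃ w : GaloisField 2 3 × GaloisField 2 3, (τ w).2 ≠ w.2
      · -- both coordinates are moved by somebody: combine
        obtain ⟨ρ1, hρ1P, w1, hw1⟩ := hA
        obtain ⟨ρ2, hρ2P, w2, hw2⟩ := hB
        obtain ⟨g1, hg1J, h1, hh1J, H1⟩ := hG ρ1 (hP'le hρ1P)
        obtain ⟨g2, hg2J, h2, hh2J, H2⟩ := hG ρ2 (hP'le hρ2P)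
        have hg1 : g1 w1.1 ≠ w1.1 := by rw [H1] at hw1; exact hw1
        have hh2 : h2 w2.2 ≠ w2.2 := by rw [H2] at hw2; exact hw2
        have hh1id : ∀ y', h1 y' = y' := by
          by_contra hcon
          push_neg at hcon
          obtain ⟨y', hy'⟩ := hcon
          have hb := hbad ρ1 (hP'le hρ1P) (hP3 ρ1 hρ1P) (w1.1, y')
          rw [H1] at hb
          exact hy' (hb hg1)
        have hg2id : ∀ x', g2 x' = x' := by
          by_contra hcon
          push_neg at hcon
          obtain ⟨x', hx'⟩ := hcon
          have hb := hbad ρ2 (hP'le hρ2P) (hP3 ρ2 hρ2P) (x', w2.2)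
          simp only [H2] at hb
          exact hh2 (hb hx')
        have hρP : ρ1 * ρ2 ∈ P' := mul_mem hρ1P hρ2P
        have hb := hbad (ρ1*ρ2) (hP'le hρP) (hP3 _ hρP) (w1.1, w2.2)
        simp only [Equiv.Perm.mul_apply, H2, H1, hg2id, hh1id] at hb
        exact hh2 (hb hg1)
      · -- second coordinates all fixed: work on first coordinates
        push_neg at hB
        obtain ⟨g1, hg1J, h1, hh1J, H1⟩ := hG τ1 (hP'le hτ1P)
        obtain ⟨g2, hg2J, h2, hh2J, H2⟩ := hG τ2 (hP'le hτ2P)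
        have hh1id : ∀ y', h1 y' = y' := by
          intro y'
          have := hB τ1 hτ1P ((0:GaloisField 2 3), y')
          rw [H1] at this
          simpa using this
        have hh2id : ∀ y', h2 y' = y' := by
          intro y'
          have := hB τ2 hτ2P ((0:GaloisField 2 3), y')
          rw [H2] at this
          simpa using this
        have H1' : ∀ w : GaloisField 2 3 × GaloisField 2 3, τ1 w = (g1 w.1, w.2) := by
          intro w; rw [H1, hh1id]
        have H2' : ∀ w : GaloisField 2 3 × GaloisField 2 3, τ2 w = (g2 w.1, w.2) := by
          intro w; rw [H2, hh2id]
        have hg1ne : ∃ x', g1 x' ≠ x' := by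
          by_contra hcon
          push_neg at hcon
          apply hτ1ne
          apply Equiv.ext
          intro w
          rw [H1', hcon]
          rfl
        have hg2ne : ∃ x', g2 x' ≠ x' := by
          by_contra hcon
          push_neg at hcon
          apply hτ2ne
          apply Equiv.ext
          intro w
          rw [H2', hcon]
          rfl
        have hg13 : ∀ x', g1 (g1 (g1 x')) = x' := by
          intro x'
          have h0 : (τ1^3) (x', (0:GaloisField 2 3)) = (1 : Equiv.Perm (GaloisField 2 3 × GaloisField 2 3)) (x', (0:GaloisField 2 3)) := by
            rw [hτ13]
          rw [perm_pow3_apply] at h0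
          rw [H1', H1', H1'] at h0
          simpa using congrArg Prod.fst h0
        obtain ⟨a1, b1, i1, hi1, r1⟩ := getRep g1 hg1J
        obtain ⟨a2, b2, i2, hi2, r2⟩ := getRep g2 hg2J
        have hi1ne : i1 ≠ 0 := by
          intro e
          obtain ⟨x', hx'⟩ := hg1ne
          rw [e] at r1
          exact hx' (affine_cube_id r1 hg13 x')
        have hg23 : ∀ x', g2 (g2 (g2 x')) = x' := by
          intro x'
          have h0 : (τ2^3) (x', (0:GaloisField 2 3)) = (1 : Equiv.Perm (GaloisField 2 3 × GaloisField 2 3)) (x', (0:GaloisField 2 3)) := by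
            rw [hτ23]
          rw [perm_pow3_apply] at h0
          rw [H2', H2', H2'] at h0
          simpa using congrArg Prod.fst h0
        have hi2ne : i2 ≠ 0 := by
          intro e
          obtain ⟨x', hx'⟩ := hg2ne
          rw [e] at r2
          exact hx' (affine_cube_id r2 hg23 x')
        have hH12 : ∀ w : GaloisField 2 3 × GaloisField 2 3,
            (τ1 * τ2) w = (g1 (g2 w.1), w.2) := by
          intro w
          rw [Equiv.Perm.mul_apply, H2', H1']
        have hH122 : ∀ w : GaloisField 2 3 × GaloisField 2 3,
            (τ1 * (τ2 * τ2)) w = (g1 (g2 (g2 w.1)), w.2) := by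
          intro w
          rw [Equiv.Perm.mul_apply, Equiv.Perm.mul_apply, H2', H2', H1']
        rcases (by omega : i1 = 1 ∨ i1 = 2) with e1 | e1 <;>
          rcases (by omega : i2 = 1 ∨ i2 = 2) with e2 | e2
        · -- (1,1) : use τ1 * τ2²
          apply contra2
          have r := r1.comp (r2.comp r2)
          rw [e1, e2] at r
          rw [show 1 + (1 + 1) = 3 * 1 by norm_num] at r
          exact mkid' _ _ _ _ (mul_mem hτ1P (mul_mem hτ2P hτ2P)) hH122 (JRep.reduce_mul 1 r)
        · -- (1,2) : use τ1 * τ2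
          apply contra1
          have r := r1.comp r2
          rw [e1, e2] at r
          rw [show 1 + 2 = 3 * 1 by norm_num] at r
          exact mkid' _ _ _ _ (mul_mem hτ1P hτ2P) hH12 (JRep.reduce_mul 1 r)
        · -- (2,1) : use τ1 * τ2
          apply contra1
          have r := r1.comp r2
          rw [e1, e2] at r
          rw [show 2 + 1 = 3 * 1 by norm_num] at r
          exact mkid' _ _ _ _ (mul_mem hτ1P hτ2P) hH12 (JRep.reduce_mul 1 r)
        · -- (2,2) : use τ1 * τ2²
          apply contra2
          have r := r1.comp (r2.comp r2)
          rw [e1, e2] at r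
          rw [show 2 + (2 + 2) = 3 * 2 by norm_num] at r
          exact mkid' _ _ _ _ (mul_mem hτ1P (mul_mem hτ2P hτ2P)) hH122 (JRep.reduce_mul 2 r)
    · -- first coordinates all fixed: work on second coordinates
      push_neg at hA
      obtain ⟨g1, hg1J, h1, hh1J, H1⟩ := hG τ1 (hP'le hτ1P)
      obtain ⟨g2, hg2J, h2, hh2J, H2⟩ := hG τ2 (hP'le hτ2P)
      have hg1id : ∀ x', g1 x' = x' := by
        intro x'
        have := hA τ1 hτ1P (x', (0:GaloisField 2 3))
        rw [H1] at this
        simpa using this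
      have hg2id : ∀ x', g2 x' = x' := by
        intro x'
        have := hA τ2 hτ2P (x', (0:GaloisField 2 3))
        rw [H2] at this
        simpa using this
      have H1' : ∀ w : GaloisField 2 3 × GaloisField 2 3, τ1 w = (w.1, h1 w.2) := by
        intro w; rw [H1, hg1id]
      have H2' : ∀ w : GaloisField 2 3 × GaloisField 2 3, τ2 w = (w.1, h2 w.2) := by
        intro w; rw [H2, hg2id]
      have hh1ne : ∃ y', h1 y' ≠ y' := by
        by_contra hcon
        push_neg at hcon
        apply hτ1ne
        apply Equiv.ext
        intro w
        rw [H1', hcon]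
        rfl
      have hh2ne : ∃ y', h2 y' ≠ y' := by
        by_contra hcon
        push_neg at hcon
        apply hτ2ne
        apply Equiv.ext
        intro w
        rw [H2', hcon]
        rfl
      have hh13 : ∀ y', h1 (h1 (h1 y')) = y' := by
        intro y'
        have h0 : (τ1^3) ((0:GaloisField 2 3), y') = (1 : Equiv.Perm (GaloisField 2 3 × GaloisField 2 3)) ((0:GaloisField 2 3), y') := by
          rw [hτ13]
        rw [perm_pow3_apply] at h0
        rw [H1', H1', H1'] at h0
        simpa using congrArg Prod.snd h0
      have hh23 : ∀ y', h2 (h2 (h2 y')) = y' := by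
        intro y'
        have h0 : (τ2^3) ((0:GaloisField 2 3), y') = (1 : Equiv.Perm (GaloisField 2 3 × GaloisField 2 3)) ((0:GaloisField 2 3), y') := by
          rw [hτ23]
        rw [perm_pow3_apply] at h0
        rw [H2', H2', H2'] at h0
        simpa using congrArg Prod.snd h0
      obtain ⟨a1, b1, i1, hi1, r1⟩ := getRep h1 hh1J
      obtain ⟨a2, b2, i2, hi2, r2⟩ := getRep h2 hh2J
      have hi1ne : i1 ≠ 0 := by
        intro e
        obtain ⟨y', hy'⟩ := hh1ne
        rw [e] at r1
        exact hy' (affine_cube_id r1 hh13 y')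
      have hi2ne : i2 ≠ 0 := by
        intro e
        obtain ⟨y', hy'⟩ := hh2ne
        rw [e] at r2
        exact hy' (affine_cube_id r2 hh23 y')
      have hH12 : ∀ w : GaloisField 2 3 × GaloisField 2 3,
          (τ1 * τ2) w = (w.1, h1 (h2 w.2)) := by
        intro w
        rw [Equiv.Perm.mul_apply, H2', H1']
      have hH122 : ∀ w : GaloisField 2 3 × GaloisField 2 3,
          (τ1 * (τ2 * τ2)) w = (w.1, h1 (h2 (h2 w.2))) := by
        intro w
        rw [Equiv.Perm.mul_apply, Equiv.Perm.mul_apply, H2', H2', H1']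
      rcases (by omega : i1 = 1 ∨ i1 = 2) with e1 | e1 <;>
        rcases (by omega : i2 = 1 ∨ i2 = 2) with e2 | e2
      · apply contra2
        have r := r1.comp (r2.comp r2)
        rw [e1, e2] at r
        rw [show 1 + (1 + 1) = 3 * 1 by norm_num] at r
        exact mkid _ _ _ _ (mul_mem hτ1P (mul_mem hτ2P hτ2P)) hH122 (JRep.reduce_mul 1 r)
      · apply contra1
        have r := r1.comp r2
        rw [e1, e2] at r
        rw [show 1 + 2 = 3 * 1 by norm_num] at r
        exact mkid _ _ _ _ (mul_mem hτ1P hτ2P) hH12 (JRep.reduce_mul 1 r)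
      · apply contra1
        have r := r1.comp r2
        rw [e1, e2] at r
        rw [show 2 + 1 = 3 * 1 by norm_num] at r
        exact mkid _ _ _ _ (mul_mem hτ1P hτ2P) hH12 (JRep.reduce_mul 1 r)
      · apply contra2
        have r := r1.comp (r2.comp r2)
        rw [e1, e2] at r
        rw [show 2 + (2 + 2) = 3 * 2 by norm_num] at r
        exact mkid _ _ _ _ (mul_mem hτ1P (mul_mem hτ2P hτ2P)) hH122 (JRep.reduce_mul 2 r)
  obtain ⟨σ, hσG, hσ3, z, hz1, hz2⟩ := key
  obtain ⟨g, hgJ, h, hhJ, Hσ⟩ := hG σ hσG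
  set x : GaloisField 2 3 := z.1 with hxdef
  set y : GaloisField 2 3 := z.2 with hydef
  have hgx : g x ≠ x := by rw [Hσ z] at hz1; exact hz1
  have hhy : h y ≠ y := by rw [Hσ z] at hz2; exact hz2
  -- cubes are the identity pointwise
  have hσ3p : ∀ w, σ (σ (σ w)) = w := by
    intro w
    have := congrArg (fun τ : Equiv.Perm _ => τ w) hσ3
    simpa [perm_pow3_apply] using this
  have hg3 : ∀ x', g (g (g x')) = x' := by
    intro x'
    have := hσ3p (x', 0)
    rw [Hσ, Hσ, Hσ] at this
    simpa using congrArg Prod.fst this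
  have hh3 : ∀ y', h (h (h y')) = y' := by
    intro y'
    have := hσ3p (0, y')
    rw [Hσ, Hσ, Hσ] at this
    simpa using congrArg Prod.snd this
  -- distinctness of orbit points
  have hx01 : x ≠ g x := fun e => hgx e.symm
  have hx12 : g x ≠ g (g x) := by
    intro e
    have := congrArg g e
    rw [hg3 x] at this
    exact hgx (e.trans this)
  have hx02 : x ≠ g (g x) := by
    intro e
    have := congrArg g e
    rw [hg3 x] at this
    exact hgx this
  have hy01 : y ≠ h y := fun e => hhy e.symm
  have hy12 : h y ≠ h (h y) := by
    intro e
    have := congrArg h e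
    rw [hh3 y] at this
    exact hhy (e.trans this)
  have hy02 : y ≠ h (h y) := by
    intro e
    have := congrArg h e
    rw [hh3 y] at this
    exact hhy this
  -- the three points
  set z0 : GaloisField 2 3 × GaloisField 2 3 := (x, y) with hz0
  set z1 : GaloisField 2 3 × GaloisField 2 3 := (g x, h y) with hz1'
  set z2 : GaloisField 2 3 × GaloisField 2 3 := (g (g x), h (h y)) with hz2'
  have hz01 : z0 ≠ z1 := fun e => hx01 (congrArg Prod.fst e)
  have hz02 : z0 ≠ z2 := fun e => hx02 (congrArg Prod.fst e)
  have hz12 : z1 ≠ z2 := fun e => hx12 (congrArg Prod.fst e)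
  have hσz0 : σ z0 = z1 := by rw [Hσ]
  have hσz1 : σ z1 = z2 := by rw [Hσ]
  have hσz2 : σ z2 = z0 := by
    rw [Hσ]
    simp only [hz2', hz0]
    exact Prod.ext (hg3 x) (hh3 y)
  set Δ : Set (GaloisField 2 3 × GaloisField 2 3) := {z0, z1, z2} with hΔ
  have hz0Δ : z0 ∈ Δ := by simp [hΔ]
  have hz1Δ : z1 ∈ Δ := by simp [hΔ]
  have hz2Δ : z2 ∈ Δ := by simp [hΔ]
  -- σ as an element of G stabilizes Δ
  set σ' : G := ⟨σ, hσG⟩ with hσ'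
  have hsmul : ∀ (τ : G) (w : GaloisField 2 3 × GaloisField 2 3), τ • w = (τ : Equiv.Perm _) w := by
    intro τ w; rfl
  have hσ'mem : σ' ∈ MulAction.stabilizer G Δ := by
    rw [MulAction.mem_stabilizer_iff]
    show σ' • ({z0, z1, z2} : Set _) = _
    rw [Set.smul_set_insert, Set.smul_set_insert, Set.smul_set_singleton]
    rw [hsmul σ' z0, hsmul σ' z1, hsmul σ' z2]
    show ({σ z0, σ z1, σ z2} : Set _) = _
    rw [hσz0, hσz1, hσz2]
    ext w
    simp only [Set.mem_insert_iff, Set.mem_singleton_iff, hΔ]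
    tauto
  set Stab := MulAction.stabilizer G Δ with hStab
  -- 3 divides the order of the stabilizer
  have hdvd3 : 3 ∣ Nat.card Stab := by
    set s0 : Stab := ⟨σ', hσ'mem⟩ with hs0
    have hs03 : s0 ^ 3 = 1 := by
      apply Subtype.ext
      apply Subtype.ext
      show σ ^ 3 = 1
      exact hσ3
    have hs0ne : s0 ≠ 1 := by
      intro e
      have e1 : s0.1 = 1 := by rw [e]; rfl
      have e2 : (s0.1.1 : Equiv.Perm _) = 1 := by rw [e1]; rfl
      have : σ = 1 := e2
      rw [this] at hσz0
      exact hz01 (by simpa using hσz0)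
    have hord : orderOf s0 = 3 := orderOf_eq_prime hs03 hs0ne
    have hdvd := orderOf_dvd_natCard s0
    rwa [hord] at hdvd
  -- 9 does not divide the order of the stabilizer
  have hfix : ∀ τ : Equiv.Perm (GaloisField 2 3 × GaloisField 2 3), τ ∈ G →
      τ z0 = z0 → τ z1 = z1 → τ z2 = z2 → τ = 1 := by
    intro τ hτG h0 h1 h2
    obtain ⟨g', hg'J, h', hh'J, Hτ⟩ := hG τ hτG
    rw [Hτ] at h0 h1 h2
    obtain ⟨a, b, i, hi, rg⟩ := getRep g' hg'J
    obtain ⟨c, d, j, hj, rh⟩ := getRep h' hh'J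
    have hgid := threefix rg hi hx01 hx02 hx12
      (congrArg Prod.fst h0) (congrArg Prod.fst h1) (congrArg Prod.fst h2)
    have hhid := threefix rh hj hy01 hy02 hy12
      (congrArg Prod.snd h0) (congrArg Prod.snd h1) (congrArg Prod.snd h2)
    apply Equiv.ext
    intro w
    rw [Hτ, hgid, hhid]
    rfl
  have hnotdvd9 : ¬ (9 ∣ Nat.card Stab) := by
    intro hdvd
    -- the stabilizer embeds into the permutations of the 3-element set Δ
    have hmemΔ : ∀ (τ : Stab) (w : GaloisField 2 3 × GaloisField 2 3), w ∈ Δ →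
        τ.1.1 w ∈ Δ := by
      intro τ w hw
      have hs : (τ : G) • Δ = Δ := MulAction.mem_stabilizer_iff.mp τ.2
      have : (τ : G) • w ∈ (τ : G) • Δ := Set.smul_mem_smul_set hw
      rw [hs] at this
      rwa [hsmul τ.1 w] at this
    have hinvcoe : ∀ τ : Stab, (τ⁻¹).1.1 = (τ.1.1)⁻¹ := fun τ => rfl
    let φ : Stab → Equiv.Perm Δ := fun τ =>
      { toFun := fun w => ⟨τ.1.1 w.1, hmemΔ τ w.1 w.2⟩
        invFun := fun w => ⟨(τ⁻¹).1.1 w.1, hmemΔ τ⁻¹ w.1 w.2⟩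
        left_inv := by
          intro w
          apply Subtype.ext
          show (τ⁻¹).1.1 (τ.1.1 w.1) = w.1
          rw [hinvcoe]
          simp
        right_inv := by
          intro w
          apply Subtype.ext
          show τ.1.1 ((τ⁻¹).1.1 w.1) = w.1
          rw [hinvcoe]
          simp }
    have hφinj : Function.Injective φ := by
      intro τ1 τ2 he
      have hpt : ∀ (w : GaloisField 2 3 × GaloisField 2 3) (hw : w ∈ Δ),
          τ1.1.1 w = τ2.1.1 w := by
        intro w hw
        have h1 := congrArg (fun (e : Equiv.Perm Δ) => (e ⟨w, hw⟩ : Δ)) he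
        exact congrArg Subtype.val h1
      have hρG : (τ1.1.1)⁻¹ * τ2.1.1 ∈ G := mul_mem (inv_mem τ1.1.2) τ2.1.2
      have hρfix : ∀ (w : GaloisField 2 3 × GaloisField 2 3), w ∈ Δ →
          ((τ1.1.1)⁻¹ * τ2.1.1) w = w := by
        intro w hw
        rw [Equiv.Perm.mul_apply, ← hpt w hw]
        simp
      have hρ1 : (τ1.1.1)⁻¹ * τ2.1.1 = 1 :=
        hfix _ hρG (hρfix z0 hz0Δ) (hρfix z1 hz1Δ) (hρfix z2 hz2Δ)
      have hp : τ1.1.1 = τ2.1.1 := by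
        have h2 := congrArg (fun q => τ1.1.1 * q) hρ1
        simpa [← mul_assoc] using h2.symm
      apply Subtype.ext; apply Subtype.ext; exact hp
    have hΔfin : Finite Δ := Set.toFinite _
    have hcard3 : Nat.card Δ = 3 := by
      rw [Nat.card_coe_set_eq, hΔ]
      rw [Set.ncard_insert_of_notMem (by simp [hz01, hz02]),
        Set.ncard_insert_of_notMem (by simp [hz12]), Set.ncard_singleton]
    have hle : Nat.card Stab ≤ Nat.card (Equiv.Perm Δ) :=
      Nat.card_le_card_of_injective φ hφinj
    have hperm6 : Nat.card (Equiv.Perm Δ) = 6 := by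
      letI : Fintype Δ := Fintype.ofFinite _
      rw [Nat.card_eq_fintype_card, Fintype.card_perm]
      rw [Nat.card_eq_fintype_card] at hcard3
      rw [hcard3]
      rfl
    have hpos : 0 < Nat.card Stab := Nat.card_pos
    have := Nat.le_of_dvd hpos hdvd
    omega
  -- conclude via factorizations
  have hpos : 0 < Nat.card Stab := Nat.card_pos
  have hposG : 0 < Nat.card G := Nat.card_pos
  have hp3 : Nat.Prime 3 := by norm_num
  have hf1 : (Nat.card Stab).factorization 3 = 1 := by
    have hub : ¬ (2 ≤ (Nat.card Stab).factorization 3) := by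
      intro hcon
      have h32 := (hp3.pow_dvd_iff_le_factorization hpos.ne').mpr hcon
      exact hnotdvd9 (by rw [show (9:ℕ) = 3^2 by norm_num]; exact h32)
    have hlb : 1 ≤ (Nat.card Stab).factorization 3 := by
      refine (hp3.pow_dvd_iff_le_factorization hpos.ne').mp ?_
      rw [pow_one]; exact hdvd3
    omega
  have hfG : 2 ≤ (Nat.card G).factorization 3 := by
    refine (hp3.pow_dvd_iff_le_factorization hposG.ne').mp ?_
    rw [show (3:ℕ)^2 = 9 by norm_num]; exact h9
  refine ⟨Δ, ?_, ?_⟩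
  · rw [pPart, hf1]
    norm_num
  · rw [pPart, pPart, hf1]
    calc (3:ℕ)^1 < 3^2 := by norm_num
    _ ≤ 3 ^ (Nat.card G).factorization 3 := Nat.pow_le_pow_right (by norm_num) hfG
end
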